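/- arXiv:2006.10438 — 7 statements merged into one kernel-verified Lean document; each statement's English description precedes it below -/
import Mathlib

section
/- Let k be a field and A a bicommutative Hopf algebra over k. If A has a finite volume (i.e. A admits a normalized integral σ and a normalized cointegral λ with λ(σ) ≠ 0), then A is finite-dimensional as a k-vector space. (Corollary of the self-duality of A induced by integrals along the multiplication.) -/
open TensorProduct

/-- A coalgebra is cocommutative if composing the comultiplication with the braiding
gives back the comultiplication. -/
def IsCocomm (k A : Type*) [CommSemiring k] [AddCommMonoid A] [Module k A]
    [Coalgebra k A] : Prop :=
  ∀ a : A, (TensorProduct.comm k A A) (Coalgebra.comul (R := k) a) = Coalgebra.comul (R := k) a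

/-- A normalized integral of a bialgebra `A` is an element `σ` with `a * σ = ε(a) • σ`
for all `a` and `ε(σ) = 1`. -/
def IsNormalizedIntegral (k A : Type*) [CommSemiring k] [Semiring A] [Bialgebra k A]
    (σ : A) : Prop :=
  (∀ a : A, a * σ = Coalgebra.counit (R := k) a • σ) ∧ Coalgebra.counit (R := k) σ = 1

/-- A normalized cointegral of a bialgebra `A` is a linear functional `λ` with `λ(1) = 1`
such that applying `id ⊗ λ` to `Δ(a)` and identifying `A ⊗ k` with `A` yields `λ(a) • 1`. -/
def IsNormalizedCointegral (k A : Type*) [CommSemiring k] [Semiring A] [Bialgebra k A]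
    (lam : A →ₗ[k] k) : Prop :=
  lam 1 = 1 ∧ ∀ a : A,
    (TensorProduct.rid k A)
      ((TensorProduct.map (LinearMap.id : A →ₗ[k] A) lam) (Coalgebra.comul (R := k) a))
      = lam a • (1 : A)

open Coalgebra hiding IsCocomm
open HopfAlgebra

/-- A bicommutative Hopf algebra with a finite volume (a normalized integral `σ` and a
normalized cointegral `λ` with `λ(σ) ≠ 0`) is finite-dimensional. -/
theorem finiteDimensional_of_finite_volume
    (k A : Type*) [Field k] [CommRing A] [HopfAlgebra k A] (hcc : IsCocomm k A)
    (σ : A) (lam : A →ₗ[k] k)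
    (hσ : IsNormalizedIntegral k A σ) (hlam : IsNormalizedCointegral k A lam)
    (hvol : lam σ ≠ 0) :
    FiniteDimensional k A := by
  classical
  obtain ⟨hint, -⟩ := hσ
  obtain ⟨-, hlam2⟩ := hlam
  set S : A →ₗ[k] A := antipode (R := k) with hS
  -- comul σ * comul c = ε(c) • comul σ
  have hK : ∀ c : A, comul (R := k) σ * comul c = counit (R := k) c • comul σ := by
    intro c
    rw [← Bialgebra.comul_mul, mul_comm, hint c, map_smul]
  -- the map u ⊗ (v ⊗ w) ↦ (S u * v) ⊗ w
  set Ψ : A ⊗[k] (A ⊗[k] A) →ₗ[k] A ⊗[k] A :=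
    ((LinearMap.mul' k A ∘ₗ S.rTensor A).rTensor A) ∘ₗ
      (TensorProduct.assoc k A A A).symm.toLinearMap with hΨ
  have hΨ_apply : ∀ (u : A) (t : A ⊗[k] A),
      (S u ⊗ₜ[k] (1 : A)) * t = Ψ (u ⊗ₜ t) := by
    intro u t
    induction t using TensorProduct.induction_on with
    | zero => rw [mul_zero, tmul_zero, map_zero]
    | tmul v w =>
        simp [hΨ, Algebra.TensorProduct.tmul_mul_tmul]
    | add x y hx hy => rw [mul_add, hx, hy, ← map_add, ← tmul_add]
  have hA1 : ∀ c : A,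
      Ψ ((comul (R := k) (A := A)).lTensor A (comul (R := k) c)) = (1 : A) ⊗ₜ[k] c := by
    intro c
    rw [hΨ]
    simp only [LinearMap.coe_comp, Function.comp_apply, LinearEquiv.coe_coe]
    rw [coassoc_symm_apply, ← LinearMap.rTensor_comp_apply, LinearMap.comp_assoc, hS,
      mul_antipode_rTensor_comul (R := k)]
    rw [LinearMap.rTensor_comp_apply, rTensor_counit_comul]
    simp
  -- the key identity: comul σ * (1 ⊗ c) = comul σ * (S c ⊗ 1)
  have hR : ∀ c : A,
      comul (R := k) σ * ((1 : A) ⊗ₜ[k] c) = comul (R := k) σ * (S c ⊗ₜ[k] (1 : A)) := by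
    intro c
    set rc := Coalgebra.Repr.arbitrary k c with hrc
    have key : ∑ i ∈ rc.index,
        (S (rc.left i) ⊗ₜ[k] (1 : A)) * (comul (R := k) σ * comul (R := k) (rc.right i))
        = comul (R := k) σ * ((1 : A) ⊗ₜ[k] c) := by
      have h1 : ∑ i ∈ rc.index,
          (S (rc.left i) ⊗ₜ[k] (1 : A)) * comul (R := k) (rc.right i) = (1 : A) ⊗ₜ[k] c := by
        calc ∑ i ∈ rc.index, (S (rc.left i) ⊗ₜ[k] (1 : A)) * comul (R := k) (rc.right i)
            = ∑ i ∈ rc.index, Ψ (rc.left i ⊗ₜ comul (R := k) (rc.right i)) :=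
              Finset.sum_congr rfl fun i _ => hΨ_apply _ _
          _ = Ψ ((comul (R := k) (A := A)).lTensor A
                (∑ i ∈ rc.index, rc.left i ⊗ₜ[k] rc.right i)) := by
              rw [map_sum, map_sum]
              exact Finset.sum_congr rfl fun i _ => by rw [LinearMap.lTensor_tmul]
          _ = (1 : A) ⊗ₜ[k] c := by rw [rc.eq]; exact hA1 c
      calc ∑ i ∈ rc.index,
          (S (rc.left i) ⊗ₜ[k] (1 : A)) * (comul (R := k) σ * comul (R := k) (rc.right i))
          = comul (R := k) σ *
            ∑ i ∈ rc.index, (S (rc.left i) ⊗ₜ[k] (1 : A)) * comul (R := k) (rc.right i) := by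
            rw [Finset.mul_sum]
            exact Finset.sum_congr rfl fun i _ => mul_left_comm _ _ _
        _ = comul (R := k) σ * ((1 : A) ⊗ₜ[k] c) := by rw [h1]
    have hc : ∑ i ∈ rc.index, counit (R := k) (rc.right i) • rc.left i = c := by
      have h0 := congrArg (TensorProduct.rid k A) (Coalgebra.sum_tmul_counit_eq rc)
      rw [map_sum] at h0
      simpa only [TensorProduct.rid_tmul, one_smul] using h0
    have key2 : ∑ i ∈ rc.index,
        (S (rc.left i) ⊗ₜ[k] (1 : A)) * (comul (R := k) σ * comul (R := k) (rc.right i))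
        = comul (R := k) σ * (S c ⊗ₜ[k] (1 : A)) := by
      calc ∑ i ∈ rc.index,
          (S (rc.left i) ⊗ₜ[k] (1 : A)) * (comul (R := k) σ * comul (R := k) (rc.right i))
          = ∑ i ∈ rc.index,
            ((counit (R := k) (rc.right i) • S (rc.left i)) ⊗ₜ[k] (1 : A)) *
              comul (R := k) σ := by
            refine Finset.sum_congr rfl fun i _ => ?_
            rw [hK, mul_smul_comm, ← smul_mul_assoc, TensorProduct.smul_tmul']
        _ = ((∑ i ∈ rc.index, counit (R := k) (rc.right i) • S (rc.left i)) ⊗ₜ[k] (1 : A)) *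
              comul (R := k) σ := by
            rw [← Finset.sum_mul, ← TensorProduct.sum_tmul]
        _ = comul (R := k) σ * (S c ⊗ₜ[k] (1 : A)) := by
            have hSc : ∑ i ∈ rc.index, counit (R := k) (rc.right i) • S (rc.left i) = S c := by
              calc ∑ i ∈ rc.index, counit (R := k) (rc.right i) • S (rc.left i)
                  = S (∑ i ∈ rc.index, counit (R := k) (rc.right i) • rc.left i) := by
                    rw [map_sum]
                    exact Finset.sum_congr rfl fun i _ => (map_smul S _ _).symm
                _ = S c := by rw [hc]
            rw [hSc, mul_comm]
    rw [← key, key2]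
  -- now project with (lam ⊗ id)
  set f : A ⊗[k] A →ₗ[k] A :=
    (TensorProduct.lid k A).toLinearMap ∘ₗ lam.rTensor A with hf
  have hf_tmul : ∀ (u v : A), f (u ⊗ₜ[k] v) = lam u • v := by
    intro u v; simp [hf]
  set rσ := Coalgebra.Repr.arbitrary k σ with hrσ
  -- cocommutativity: ∑ right ⊗ left = comul σ
  have hswap : ∑ i ∈ rσ.index, rσ.right i ⊗ₜ[k] rσ.left i = comul (R := k) σ := by
    have h0 := congrArg (TensorProduct.comm k A A) rσ.eq
    rw [map_sum, hcc σ] at h0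
    simpa using h0
  have hv : ∑ i ∈ rσ.index, lam (rσ.left i) • rσ.right i = lam σ • (1 : A) := by
    have h0 := hlam2 σ
    rw [← hswap, map_sum, map_sum] at h0
    simpa using h0
  set W : Submodule k A := Submodule.span k (rσ.right '' (rσ.index : Set _)) with hW
  have hmem : ∀ c : A, c ∈ W := by
    intro c
    have h := congrArg f (hR c)
    have hL : f (comul (R := k) σ * ((1 : A) ⊗ₜ[k] c)) = lam σ • c := by
      rw [← rσ.eq, Finset.sum_mul, map_sum]
      calc ∑ i ∈ rσ.index, f ((rσ.left i ⊗ₜ[k] rσ.right i) * ((1 : A) ⊗ₜ[k] c))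
          = ∑ i ∈ rσ.index, (lam (rσ.left i) • rσ.right i) * c := by
            refine Finset.sum_congr rfl fun i _ => ?_
            rw [Algebra.TensorProduct.tmul_mul_tmul, mul_one, hf_tmul, smul_mul_assoc]
        _ = (∑ i ∈ rσ.index, lam (rσ.left i) • rσ.right i) * c := by rw [Finset.sum_mul]
        _ = lam σ • c := by rw [hv, smul_mul_assoc, one_mul]
    have hRmem : f (comul (R := k) σ * (S c ⊗ₜ[k] (1 : A))) ∈ W := by
      rw [← rσ.eq, Finset.sum_mul, map_sum]
      refine Submodule.sum_mem _ fun i hi => ?_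
      rw [Algebra.TensorProduct.tmul_mul_tmul, mul_one, hf_tmul]
      exact W.smul_mem _ (Submodule.subset_span ⟨i, hi, rfl⟩)
    have : lam σ • c ∈ W := by rw [← hL, h]; exact hRmem
    have h2 := W.smul_mem (lam σ)⁻¹ this
    rwa [inv_smul_smul₀ hvol] at h2
  have hfg : (⊤ : Submodule k A).FG := by
    refine ⟨rσ.index.image rσ.right, ?_⟩
    rw [Finset.coe_image]
    exact eq_top_iff.mpr fun c _ => hmem c
  exact Module.finite_def.mpr hfg
end

section
/- Let k be a field and A a bicommutative Hopf algebra over k with a normalized integral σ and a normalized cointegral λ satisfying λ(σ) ≠ 0. Then A is finite-dimensional over k and (Module.finrank k A : k) * λ(σ) = 1; in other words, the inverse of the inverse volume λ(σ) equals the image of dim_k A in k. -/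
open TensorProduct

section Aux

open Coalgebra HopfAlgebra

variable {k A : Type*} [Field k] [CommRing A] [HopfAlgebra k A]

/-- For a normalized integral `σ`, `Δ b * Δ σ = ε b • Δ σ`. -/
lemma comul_mul_comul_integral (σ : A) (hσ : ∀ a : A, a * σ = Coalgebra.counit (R := k) a • σ)
    (b : A) :
    Coalgebra.comul (R := k) b * Coalgebra.comul (R := k) σ
      = Coalgebra.counit (R := k) b • Coalgebra.comul (R := k) σ := by
  rw [← Bialgebra.comul_mul, hσ, map_smul]

/-- The key Larson–Sweedler identity: `(1 ⊗ a) · Δσ = (S a ⊗ 1) · Δσ`. -/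
lemma key_identity (σ : A) (hσ : ∀ a : A, a * σ = Coalgebra.counit (R := k) a • σ) (a : A) :
    (1 ⊗ₜ[k] a) * Coalgebra.comul (R := k) σ
      = (antipode (R := k) a ⊗ₜ[k] (1 : A)) * Coalgebra.comul (R := k) σ := by
  set c : A ⊗[k] A := Coalgebra.comul (R := k) σ with hc
  set S : A →ₗ[k] A := antipode (R := k) with hS
  set ra : Coalgebra.Repr k a (A × A) := Coalgebra.Repr.arbitrary k a with hra
  set r1 : (i : ra.ι) → Coalgebra.Repr k (ra.left i) (A × A) :=
    fun i => Coalgebra.Repr.arbitrary k (ra.left i) with hr1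
  set r2 : (i : ra.ι) → Coalgebra.Repr k (ra.right i) (A × A) :=
    fun i => Coalgebra.Repr.arbitrary k (ra.right i) with hr2
  have hco := Coalgebra.sum_tmul_tmul_eq ra r1 r2
  let Θ : A ⊗[k] (A ⊗[k] A) →ₗ[k] A ⊗[k] A :=
    LinearMap.mulRight k c ∘ₗ
      (TensorProduct.map (LinearMap.mul' k A ∘ₗ S.rTensor A) LinearMap.id) ∘ₗ
      (TensorProduct.assoc k A A A).symm.toLinearMap
  have hΘ : ∀ x y z : A, Θ (x ⊗ₜ[k] (y ⊗ₜ[k] z)) = ((S x * y) ⊗ₜ[k] z) * c := by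
    intro x y z
    simp [Θ]
  have H := congrArg Θ hco
  simp only [map_sum, hΘ] at H
  -- counit sum facts
  have hL : ∑ i ∈ ra.index, Coalgebra.counit (R := k) (ra.left i) • ra.right i = a := by
    have h := congrArg (TensorProduct.lid k A) (Coalgebra.sum_counit_tmul_eq ra)
    simp only [map_sum, TensorProduct.lid_tmul, one_smul] at h
    exact h
  have hR : ∑ i ∈ ra.index, Coalgebra.counit (R := k) (ra.right i) • ra.left i = a := by
    have h := congrArg (TensorProduct.rid k A) (Coalgebra.sum_tmul_counit_eq ra)
    simp only [map_sum, TensorProduct.rid_tmul, one_smul] at h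
    exact h
  -- left side of H
  have HL : ∑ i ∈ ra.index, ∑ j ∈ (r1 i).index,
      ((S ((r1 i).left j) * (r1 i).right j) ⊗ₜ[k] ra.right i) * c = (1 ⊗ₜ[k] a) * c := by
    have h1 : ∀ i ∈ ra.index, ∑ j ∈ (r1 i).index,
        ((S ((r1 i).left j) * (r1 i).right j) ⊗ₜ[k] ra.right i) * c
          = Coalgebra.counit (R := k) (ra.left i) • ((1 ⊗ₜ[k] ra.right i) * c) := by
      intro i _
      rw [← Finset.sum_mul, ← TensorProduct.sum_tmul, hS,
        HopfAlgebra.sum_antipode_mul_eq_smul (r1 i), ← TensorProduct.smul_tmul',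
        smul_mul_assoc]
    rw [Finset.sum_congr rfl h1]
    simp only [← smul_mul_assoc]
    rw [← Finset.sum_mul]
    congr 1
    simp only [← TensorProduct.tmul_smul]
    rw [← TensorProduct.tmul_sum, hL]
  -- right side of H
  have HR : ∑ i ∈ ra.index, ∑ j ∈ (r2 i).index,
      ((S (ra.left i) * (r2 i).left j) ⊗ₜ[k] (r2 i).right j) * c
        = (S a ⊗ₜ[k] (1 : A)) * c := by
    have h2 : ∀ i ∈ ra.index, ∑ j ∈ (r2 i).index,
        ((S (ra.left i) * (r2 i).left j) ⊗ₜ[k] (r2 i).right j) * c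
          = Coalgebra.counit (R := k) (ra.right i) • ((S (ra.left i) ⊗ₜ[k] (1 : A)) * c) := by
      intro i _
      have e1 : ∀ j ∈ (r2 i).index, ((S (ra.left i) * (r2 i).left j) ⊗ₜ[k] (r2 i).right j) * c
          = (S (ra.left i) ⊗ₜ[k] (1 : A)) * (((r2 i).left j ⊗ₜ[k] (r2 i).right j) * c) := by
        intro j _
        rw [← mul_assoc, Algebra.TensorProduct.tmul_mul_tmul, one_mul]
      rw [Finset.sum_congr rfl e1, ← Finset.mul_sum, ← Finset.sum_mul, (r2 i).eq,
        comul_mul_comul_integral σ hσ, mul_smul_comm]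
    rw [Finset.sum_congr rfl h2]
    have h3 : ∑ i ∈ ra.index, Coalgebra.counit (R := k) (ra.right i) • S (ra.left i) = S a := by
      simp only [← map_smul]
      rw [← map_sum, hR]
    simp only [← smul_mul_assoc]
    rw [← Finset.sum_mul]
    congr 1
    simp only [TensorProduct.smul_tmul']
    rw [← TensorProduct.sum_tmul, h3]
  rw [HL, HR] at H
  exact H

/-- The factoring identity: `λ(σ) • a = ∑ λ(S a · σ₍₁₎) • σ₍₂₎`. -/
lemma factoring (σ : A) (lam : A →ₗ[k] k)
    (hσ : IsNormalizedIntegral k A σ) (hlam : IsNormalizedCointegral k A lam)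
    (hcc : _root_.IsCocomm k A) (rσ : Coalgebra.Repr k σ (A × A)) (a : A) :
    lam σ • a = ∑ i ∈ rσ.index, lam (antipode (R := k) a * rσ.left i) • rσ.right i := by
  let Λ : A ⊗[k] A →ₗ[k] A :=
    (TensorProduct.lid k A).toLinearMap ∘ₗ TensorProduct.map lam LinearMap.id
  have hΛ : ∀ x y : A, Λ (x ⊗ₜ[k] y) = lam x • y := by intro x y; simp [Λ]
  -- cocommutativity: ∑ right ⊗ left = comul σ
  have hccσ : ∑ i ∈ rσ.index, rσ.right i ⊗ₜ[k] rσ.left i = Coalgebra.comul (R := k) σ := by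
    have h := congrArg (TensorProduct.comm k A A) rσ.eq
    rw [hcc σ] at h
    rw [← h, map_sum]
    exact Finset.sum_congr rfl fun i _ => TensorProduct.comm_tmul k A A _ _
  -- ∑ lam (left) • right = lam σ • 1
  have hcoint : ∑ i ∈ rσ.index, lam (rσ.left i) • rσ.right i = lam σ • (1 : A) := by
    have h := hlam.2 σ
    rw [← hccσ, map_sum, map_sum] at h
    simpa only [TensorProduct.map_tmul, LinearMap.id_coe, id_eq,
      TensorProduct.rid_tmul] using h
  have H := congrArg Λ (key_identity σ hσ.1 a)
  rw [← rσ.eq] at H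
  rw [Finset.mul_sum, Finset.mul_sum, map_sum, map_sum] at H
  have H1 : ∀ i ∈ rσ.index, Λ ((1 ⊗ₜ[k] a) * (rσ.left i ⊗ₜ[k] rσ.right i))
      = lam (rσ.left i) • (a * rσ.right i) := by
    intro i _
    rw [Algebra.TensorProduct.tmul_mul_tmul, one_mul, hΛ]
  have H2 : ∀ i ∈ rσ.index, Λ ((antipode (R := k) a ⊗ₜ[k] (1 : A)) * (rσ.left i ⊗ₜ[k] rσ.right i))
      = lam (antipode (R := k) a * rσ.left i) • rσ.right i := by
    intro i _
    rw [Algebra.TensorProduct.tmul_mul_tmul, one_mul, hΛ]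
  rw [Finset.sum_congr rfl H1, Finset.sum_congr rfl H2] at H
  calc lam σ • a = a * (lam σ • (1 : A)) := by rw [mul_smul_comm, mul_one]
    _ = a * ∑ i ∈ rσ.index, lam (rσ.left i) • rσ.right i := by rw [hcoint]
    _ = ∑ i ∈ rσ.index, lam (rσ.left i) • (a * rσ.right i) := by
        rw [Finset.mul_sum]; exact Finset.sum_congr rfl fun i _ => (mul_smul_comm _ _ _)
    _ = ∑ i ∈ rσ.index, lam (antipode (R := k) a * rσ.left i) • rσ.right i := H

end Aux

/-- For a bicommutative Hopf algebra `A` over `k` with a normalized integral `σ` and a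
normalized cointegral `λ` with `λ(σ) ≠ 0`, `A` is finite-dimensional and
`(dim_k A : k) * λ(σ) = 1`: the inverse of the inverse volume is the image of `dim_k A` in `k`. -/
theorem finrank_mul_inverse_volume_eq_one
    (k A : Type*) [Field k] [CommRing A] [HopfAlgebra k A] (hcc : IsCocomm k A)
    (σ : A) (lam : A →ₗ[k] k)
    (hσ : IsNormalizedIntegral k A σ) (hlam : IsNormalizedCointegral k A lam)
    (hvol : lam σ ≠ 0) :
    FiniteDimensional k A ∧ (Module.finrank k A : k) * lam σ = 1 := by
  classical
  set S : A →ₗ[k] A := HopfAlgebra.antipode (R := k) with hS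
  set rσ : Coalgebra.Repr k σ (A × A) := Coalgebra.Repr.arbitrary k σ with hrσ
  have hfact := factoring σ lam hσ hlam hcc rσ
  -- finite dimensionality
  have hfd : FiniteDimensional k A := by
    refine ⟨⟨rσ.index.image rσ.right, le_antisymm le_top ?_⟩⟩
    intro a _
    have : a = (lam σ)⁻¹ • ∑ i ∈ rσ.index, lam (S a * rσ.left i) • rσ.right i := by
      rw [← hfact a, smul_smul, inv_mul_cancel₀ hvol, one_smul]
    rw [this]
    refine Submodule.smul_mem _ _ (Submodule.sum_mem _ fun i hi => ?_)
    exact Submodule.smul_mem _ _ (Submodule.subset_span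
      (Finset.mem_coe.2 (Finset.mem_image_of_mem _ hi)))
  refine ⟨hfd, ?_⟩
  -- trace computation
  let T : A →ₗ[k] A := ∑ i ∈ rσ.index,
    dualTensorHom k A A ((lam ∘ₗ LinearMap.mulLeft k (rσ.left i) ∘ₗ S) ⊗ₜ[k] rσ.right i)
  have hT : (lam σ) • (LinearMap.id : A →ₗ[k] A) = T := by
    ext a
    simp only [LinearMap.smul_apply, LinearMap.id_coe, id_eq, T, LinearMap.sum_apply,
      dualTensorHom_apply, LinearMap.comp_apply, LinearMap.mulLeft_apply]
    rw [hfact a]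
    exact Finset.sum_congr rfl fun i _ => by rw [mul_comm]
  have htr := congrArg (LinearMap.trace k A) hT
  rw [map_smul, LinearMap.trace_id, map_sum] at htr
  have htrT : ∀ i ∈ rσ.index,
      LinearMap.trace k A (dualTensorHom k A A
        ((lam ∘ₗ LinearMap.mulLeft k (rσ.left i) ∘ₗ S) ⊗ₜ[k] rσ.right i))
        = lam (rσ.left i * S (rσ.right i)) := by
    intro i _
    rw [LinearMap.trace_eq_contract_apply, contractLeft_apply]
    simp [LinearMap.mulLeft_apply]
  rw [Finset.sum_congr rfl htrT, ← map_sum] at htr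
  have hone : ∑ i ∈ rσ.index, rσ.left i * S (rσ.right i) = 1 := by
    have h := HopfAlgebra.sum_mul_antipode_eq_algebraMap_counit (R := k) rσ
    rw [hσ.2, map_one] at h
    exact h
  rw [hone, hlam.1] at htr
  rw [mul_comm]
  simpa [smul_eq_mul] using htr
end

section
/- Let k be a field and A a bicommutative Hopf algebra over k. Then A has a finite volume (i.e. A admits a normalized integral σ and a normalized cointegral λ with λ(σ) ≠ 0) if and only if A is finite-dimensional over k and the image (Module.finrank k A : k) of its dimension in k is nonzero. -/
open TensorProduct
set_option maxHeartbeats 1000000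

section Tools

open Coalgebra HopfAlgebra

variable {k A : Type*} [Field k] [CommRing A] [HopfAlgebra k A]

/-- scalar form of the counit laws -/
lemma sum_counit_smul {ι : Type*} {a : A} (r : Coalgebra.Repr k a ι) :
    ∑ i ∈ r.index, Coalgebra.counit (R := k) (r.left i) • r.right i = a := by
  have h := congrArg (TensorProduct.lid k A) (Coalgebra.sum_counit_tmul_eq r)
  rw [map_sum] at h
  simp only [TensorProduct.lid_tmul, one_smul] at h
  exact h

lemma sum_smul_counit {ι : Type*} {a : A} (r : Coalgebra.Repr k a ι) :
    ∑ i ∈ r.index, Coalgebra.counit (R := k) (r.right i) • r.left i = a := by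
  have h := congrArg (TensorProduct.rid k A) (Coalgebra.sum_tmul_counit_eq r)
  rw [map_sum] at h
  simp only [TensorProduct.rid_tmul, one_smul] at h
  exact h

/-- cocommutativity at the level of representations -/
lemma sum_swap_eq_comul
    (hcc : ∀ a : A, (TensorProduct.comm k A A) (Coalgebra.comul (R := k) a) = Coalgebra.comul (R := k) a)
    {ι : Type*} {a : A} (r : Coalgebra.Repr k a ι) :
    ∑ i ∈ r.index, r.right i ⊗ₜ[k] r.left i = Coalgebra.comul (R := k) a := by
  have h : (TensorProduct.comm k A A) (∑ i ∈ r.index, r.left i ⊗ₜ[k] r.right i)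
      = Coalgebra.comul (R := k) a := by rw [r.eq]; exact hcc a
  rw [map_sum] at h
  simpa only [TensorProduct.comm_tmul] using h

/-- the swapped representation, using cocommutativity -/
def swapRepr
    (hcc : ∀ a : A, (TensorProduct.comm k A A) (Coalgebra.comul (R := k) a) = Coalgebra.comul (R := k) a)
    {ι : Type*} {a : A} (r : Coalgebra.Repr k a ι) : Coalgebra.Repr k a ι where
  index := r.index
  left := r.right
  right := r.left
  eq := sum_swap_eq_comul hcc r

/-- Key sub-lemma: `∑ S(a₁)a₂ ⊗ a₃ = 1 ⊗ a`. -/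
lemma sum_antipode_mul_tmul {ι : Type*} {a : A} (r : Coalgebra.Repr k a ι)
    (rr : (i : r.ι) → Coalgebra.Repr k (r.right i) (A × A)) :
    ∑ i ∈ r.index, ∑ j ∈ (rr i).index,
      (HopfAlgebra.antipode (R := k) (r.left i) * (rr i).left j) ⊗ₜ[k] (rr i).right j
      = (1 : A) ⊗ₜ[k] a := by
  classical
  set S := HopfAlgebra.antipode (R := k) (A := A) with hS
  let rl : (i : r.ι) → Coalgebra.Repr k (r.left i) (A × A) := fun i => ℛ k (r.left i)
  have key := Coalgebra.sum_tmul_tmul_eq r rl rr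
  let Φ : A ⊗[k] (A ⊗[k] A) →ₗ[k] A ⊗[k] A :=
    (LinearMap.mul' k A).rTensor A ∘ₗ ((TensorProduct.assoc k A A A).symm.toLinearMap)
      ∘ₗ S.rTensor (A ⊗[k] A)
  have hΦ : ∀ x y z : A, Φ (x ⊗ₜ (y ⊗ₜ z)) = (S x * y) ⊗ₜ z := by
    intro x y z
    simp [Φ, TensorProduct.assoc_symm_tmul]
  have h2 := congrArg Φ key
  simp only [map_sum, hΦ] at h2
  rw [← h2]
  calc ∑ i ∈ r.index, ∑ j ∈ (rl i).index,
        (S ((rl i).left j) * (rl i).right j) ⊗ₜ[k] r.right i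
      = ∑ i ∈ r.index, (∑ j ∈ (rl i).index,
        S ((rl i).left j) * (rl i).right j) ⊗ₜ[k] r.right i := by
        simp only [TensorProduct.sum_tmul]
    _ = ∑ i ∈ r.index, (Coalgebra.counit (R := k) (r.left i) • (1:A)) ⊗ₜ[k] r.right i := by
        refine Finset.sum_congr rfl fun i _ => ?_
        rw [hS, HopfAlgebra.sum_antipode_mul_eq_smul (rl i)]
    _ = (1 : A) ⊗ₜ[k] a := by
        simp only [TensorProduct.smul_tmul, ← TensorProduct.tmul_sum]
        rw [_root_.sum_counit_smul r]

/-- The fundamental identity for integrals: `ΔΛ * (1 ⊗ a) = ΔΛ * (S a ⊗ 1)`. -/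
lemma integral_comul_mul {Λ : A} (hΛ : ∀ a : A, a * Λ = Coalgebra.counit (R := k) a • Λ)
    (a : A) :
    Coalgebra.comul (R := k) Λ * ((1:A) ⊗ₜ[k] a) =
      Coalgebra.comul (R := k) Λ * (HopfAlgebra.antipode (R := k) a ⊗ₜ[k] (1:A)) := by
  classical
  set S := HopfAlgebra.antipode (R := k) (A := A) with hS
  set T := Coalgebra.comul (R := k) Λ with hT
  let r := ℛ k a
  let rr : (i : r.ι) → Coalgebra.Repr k (r.right i) (A × A) := fun i => ℛ k (r.right i)
  have e1 : ∀ i : r.ι, Coalgebra.comul (R := k) (r.right i) * T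
      = Coalgebra.counit (R := k) (r.right i) • T := by
    intro i
    rw [hT, ← Bialgebra.comul_mul, hΛ (r.right i), map_smul]
  have eval1 : ∑ i ∈ r.index, (S (r.left i) ⊗ₜ[k] (1:A)) * (Coalgebra.comul (R := k) (r.right i) * T)
      = T * (S a ⊗ₜ[k] (1:A)) := by
    calc ∑ i ∈ r.index, (S (r.left i) ⊗ₜ[k] (1:A)) * (Coalgebra.comul (R := k) (r.right i) * T)
        = ∑ i ∈ r.index, (Coalgebra.counit (R := k) (r.right i) • (S (r.left i) ⊗ₜ[k] (1:A))) * T := by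
          refine Finset.sum_congr rfl fun i _ => ?_
          rw [e1 i, mul_smul_comm, smul_mul_assoc, mul_comm]
      _ = (∑ i ∈ r.index, Coalgebra.counit (R := k) (r.right i) • (S (r.left i) ⊗ₜ[k] (1:A))) * T := by
          rw [Finset.sum_mul]
      _ = (S a ⊗ₜ[k] (1:A)) * T := by
          congr 1
          rw [show ∑ i ∈ r.index, Coalgebra.counit (R := k) (r.right i) • (S (r.left i) ⊗ₜ[k] (1:A))
              = (S (∑ i ∈ r.index, Coalgebra.counit (R := k) (r.right i) • r.left i)) ⊗ₜ[k] (1:A) by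
            rw [map_sum]
            simp only [TensorProduct.sum_tmul, map_smul, TensorProduct.smul_tmul']]
          rw [sum_smul_counit r]
      _ = T * (S a ⊗ₜ[k] (1:A)) := mul_comm _ _
  have eval2 : ∑ i ∈ r.index, (S (r.left i) ⊗ₜ[k] (1:A)) * (Coalgebra.comul (R := k) (r.right i) * T)
      = T * ((1:A) ⊗ₜ[k] a) := by
    calc ∑ i ∈ r.index, (S (r.left i) ⊗ₜ[k] (1:A)) * (Coalgebra.comul (R := k) (r.right i) * T)
        = ∑ i ∈ r.index, ∑ j ∈ (rr i).index,
            ((S (r.left i) * (rr i).left j) ⊗ₜ[k] (rr i).right j) * T := by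
          refine Finset.sum_congr rfl fun i _ => ?_
          rw [← (rr i).eq, Finset.sum_mul, Finset.mul_sum]
          refine Finset.sum_congr rfl fun j _ => ?_
          rw [← mul_assoc]
          congr 1
          rw [Algebra.TensorProduct.tmul_mul_tmul, one_mul]
      _ = (∑ i ∈ r.index, ∑ j ∈ (rr i).index,
            (S (r.left i) * (rr i).left j) ⊗ₜ[k] (rr i).right j) * T := by
          rw [Finset.sum_mul]
          exact Finset.sum_congr rfl fun i _ => (Finset.sum_mul _ _ _).symm
      _ = ((1:A) ⊗ₜ[k] a) * T := by rw [sum_antipode_mul_tmul r rr]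
      _ = T * ((1:A) ⊗ₜ[k] a) := mul_comm _ _
  rw [← eval1, ← eval2]

/-- representation of a product -/
def mulRepr {ι κ : Type*} {x y : A} (rx : Coalgebra.Repr k x ι) (ry : Coalgebra.Repr k y κ) :
    Coalgebra.Repr k (x * y) (ι × κ) where
  index := rx.index ×ˢ ry.index
  left p := rx.left p.1 * ry.left p.2
  right p := rx.right p.1 * ry.right p.2
  eq := by
    rw [Bialgebra.comul_mul, ← rx.eq, ← ry.eq, Finset.sum_mul_sum]
    rw [Finset.sum_product]
    simp only [Algebra.TensorProduct.tmul_mul_tmul]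

/-- auxiliary collapse lemma for the antipode-multiplicativity proof -/
lemma antipode_hom_collapse {w : A} (rw : Coalgebra.Repr k w (A × A))
    (rwL : (p : rw.ι) → Coalgebra.Repr k (rw.left p) (A × A)) (c d : A) :
    ∑ p ∈ rw.index, ∑ q ∈ (rwL p).index,
      HopfAlgebra.antipode (R := k) (c * (rwL p).left q) *
        ((d * (rwL p).right q) * HopfAlgebra.antipode (R := k) (rw.right p))
      = HopfAlgebra.antipode (R := k) (c * w) * d := by
  classical
  set S := HopfAlgebra.antipode (R := k) (A := A) with hS
  let rwR : (p : rw.ι) → Coalgebra.Repr k (rw.right p) (A × A) := fun p => ℛ k (rw.right p)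
  have key := Coalgebra.sum_tmul_tmul_eq rw rwL rwR
  let m2 : A ⊗[k] A →ₗ[k] A :=
    (LinearMap.mul' k A) ∘ₗ (TensorProduct.map (LinearMap.mulLeft k d) S)
  let Ψ : A ⊗[k] (A ⊗[k] A) →ₗ[k] A :=
    (LinearMap.mul' k A) ∘ₗ (TensorProduct.map (S ∘ₗ (LinearMap.mulLeft k c)) m2)
  have hΨ : ∀ x y z : A, Ψ (x ⊗ₜ (y ⊗ₜ z)) = S (c * x) * ((d * y) * S z) := by
    intro x y z; simp [Ψ, m2]
  have h2 := congrArg Ψ key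
  simp only [map_sum, hΨ] at h2
  rw [h2]
  let mu : A →ₗ[k] A := (LinearMap.mulRight k d) ∘ₗ S ∘ₗ (LinearMap.mulLeft k c)
  have hmu : ∀ x : A, mu x = S (c * x) * d := by intro x; simp [mu]
  calc ∑ p ∈ rw.index, ∑ q ∈ (rwR p).index,
        S (c * rw.left p) * ((d * (rwR p).left q) * S ((rwR p).right q))
      = ∑ p ∈ rw.index, S (c * rw.left p) * (d * ∑ q ∈ (rwR p).index,
        (rwR p).left q * S ((rwR p).right q)) := by
        refine Finset.sum_congr rfl fun p _ => ?_
        rw [Finset.mul_sum, Finset.mul_sum]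
        refine Finset.sum_congr rfl fun q _ => ?_
        ring
    _ = ∑ p ∈ rw.index, Coalgebra.counit (R := k) (rw.right p) •
          mu (rw.left p) := by
        refine Finset.sum_congr rfl fun p _ => ?_
        rw [hS, HopfAlgebra.sum_mul_antipode_eq_smul (rwR p)]
        rw [mul_smul_comm, mul_one, mul_smul_comm, hmu]
    _ = S (c * w) * d := by
        have h3 := congrArg mu (sum_smul_counit rw)
        rw [map_sum] at h3
        simp only [map_smul] at h3
        simp only [hmu] at h3
        exact h3

/-- the antipode of a commutative Hopf algebra is multiplicative -/
lemma antipode_mul (a b : A) :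
    HopfAlgebra.antipode (R := k) (a * b) =
      HopfAlgebra.antipode (R := k) a * HopfAlgebra.antipode (R := k) (A := A) b := by
  classical
  set S := HopfAlgebra.antipode (R := k) (A := A) with hS
  let ra := ℛ k a
  let rb := ℛ k b
  let raL : (i : ra.ι) → Coalgebra.Repr k (ra.left i) (A × A) := fun i => ℛ k (ra.left i)
  let rbL : (p : rb.ι) → Coalgebra.Repr k (rb.left p) (A × A) := fun p => ℛ k (rb.left p)
  -- the master sum
  set X : A := ∑ i ∈ ra.index, ∑ j ∈ (raL i).index, ∑ p ∈ rb.index, ∑ q ∈ (rbL p).index,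
    S ((raL i).left j * (rbL p).left q) *
      (((raL i).right j * (rbL p).right q) * S (rb.right p)) * S (ra.right i) with hX
  -- Evaluation 1 : X = S (a * b)
  have eval1 : X = S (a * b) := by
    rw [hX]
    have inner : ∀ i ∈ ra.index, ∀ j ∈ (raL i).index,
        ∑ p ∈ rb.index, ∑ q ∈ (rbL p).index,
          S ((raL i).left j * (rbL p).left q) *
            (((raL i).right j * (rbL p).right q) * S (rb.right p)) * S (ra.right i)
        = S ((raL i).left j * b) * (raL i).right j * S (ra.right i) := by
      intro i _ j _
      have h := antipode_hom_collapse (k := k) rb rbL ((raL i).left j) ((raL i).right j)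
      calc ∑ p ∈ rb.index, ∑ q ∈ (rbL p).index,
            S ((raL i).left j * (rbL p).left q) *
              (((raL i).right j * (rbL p).right q) * S (rb.right p)) * S (ra.right i)
          = (∑ p ∈ rb.index, ∑ q ∈ (rbL p).index,
              S ((raL i).left j * (rbL p).left q) *
              (((raL i).right j * (rbL p).right q) * S (rb.right p))) * S (ra.right i) := by
            rw [Finset.sum_mul]
            exact Finset.sum_congr rfl fun p _ => (Finset.sum_mul _ _ _).symm
        _ = S ((raL i).left j * b) * (raL i).right j * S (ra.right i) := by rw [h]
    calc ∑ i ∈ ra.index, ∑ j ∈ (raL i).index, ∑ p ∈ rb.index, ∑ q ∈ (rbL p).index,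
          S ((raL i).left j * (rbL p).left q) *
            (((raL i).right j * (rbL p).right q) * S (rb.right p)) * S (ra.right i)
        = ∑ i ∈ ra.index, ∑ j ∈ (raL i).index,
            S (b * (raL i).left j) * ((1 : A) * (raL i).right j) * S (ra.right i) := by
          refine Finset.sum_congr rfl fun i hi => Finset.sum_congr rfl fun j hj => ?_
          rw [inner i hi j hj, mul_comm ((raL i).left j) b, one_mul]
      _ = ∑ i ∈ ra.index, ∑ j ∈ (raL i).index,
            S (b * (raL i).left j) * (((1 : A) * (raL i).right j) * S (ra.right i)) := by
          refine Finset.sum_congr rfl fun i _ => Finset.sum_congr rfl fun j _ => ?_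
          ring
      _ = S (b * a) * 1 := antipode_hom_collapse (k := k) ra raL b 1
      _ = S (a * b) := by rw [mul_one, mul_comm b a]
  -- Evaluation 2 : X = S b * S a
  have eval2 : X = S b * S a := by
    rw [hX]
    calc ∑ i ∈ ra.index, ∑ j ∈ (raL i).index, ∑ p ∈ rb.index, ∑ q ∈ (rbL p).index,
          S ((raL i).left j * (rbL p).left q) *
            (((raL i).right j * (rbL p).right q) * S (rb.right p)) * S (ra.right i)
        = ∑ i ∈ ra.index, ∑ p ∈ rb.index, (∑ j ∈ (raL i).index, ∑ q ∈ (rbL p).index,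
            S ((raL i).left j * (rbL p).left q) * ((raL i).right j * (rbL p).right q)) *
            (S (rb.right p) * S (ra.right i)) := by
          refine Finset.sum_congr rfl fun i _ => ?_
          rw [Finset.sum_comm]
          refine Finset.sum_congr rfl fun p _ => ?_
          rw [Finset.sum_mul]
          refine Finset.sum_congr rfl fun j _ => ?_
          rw [Finset.sum_mul]
          refine Finset.sum_congr rfl fun q _ => ?_
          ring
      _ = ∑ i ∈ ra.index, ∑ p ∈ rb.index,
            (Coalgebra.counit (R := k) (ra.left i * rb.left p) • (1 : A)) *
            (S (rb.right p) * S (ra.right i)) := by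
          refine Finset.sum_congr rfl fun i _ => Finset.sum_congr rfl fun p _ => ?_
          congr 1
          have h := HopfAlgebra.sum_antipode_mul_eq_smul (R := k) (mulRepr (raL i) (rbL p))
          have h' : ∑ z ∈ (raL i).index ×ˢ (rbL p).index,
              S ((raL i).left z.1 * (rbL p).left z.2) *
                ((raL i).right z.1 * (rbL p).right z.2)
              = Coalgebra.counit (R := k) (ra.left i * rb.left p) • (1:A) := h
          rw [Finset.sum_product] at h'
          exact h'
      _ = (∑ p ∈ rb.index, Coalgebra.counit (R := k) (rb.left p) • S (rb.right p)) *
            (∑ i ∈ ra.index, Coalgebra.counit (R := k) (ra.left i) • S (ra.right i)) := by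
          rw [Finset.sum_mul_sum]
          rw [Finset.sum_comm]
          refine Finset.sum_congr rfl fun i _ => Finset.sum_congr rfl fun p _ => ?_
          rw [Bialgebra.counit_mul]
          simp only [smul_mul_assoc, mul_smul_comm, one_mul, smul_smul]
      _ = S b * S a := by
          have h1 := congrArg S (_root_.sum_counit_smul rb)
          rw [map_sum] at h1
          simp only [map_smul] at h1
          have h2 := congrArg S (_root_.sum_counit_smul ra)
          rw [map_sum] at h2
          simp only [map_smul] at h2
          rw [h1, h2]
  rw [← eval1, eval2, hS]
  rw [mul_comm]

lemma antipode_one : HopfAlgebra.antipode (R := k) (A := A) 1 = 1 := by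
  let r1 : Coalgebra.Repr k (1 : A) Unit :=
    { index := {Unit.unit}, left := fun _ => 1, right := fun _ => 1,
      eq := by simp [Algebra.TensorProduct.one_def] }
  have h := HopfAlgebra.sum_antipode_mul_eq_smul (R := k) r1
  simpa [r1] using h

/-- the antipode of a commutative Hopf algebra is an involution -/
lemma antipode_antipode (a : A) :
    HopfAlgebra.antipode (R := k) (HopfAlgebra.antipode (R := k) (A := A) a) = a := by
  classical
  set S := HopfAlgebra.antipode (R := k) (A := A) with hS
  let ra := ℛ k a
  let raL : (i : ra.ι) → Coalgebra.Repr k (ra.left i) (A × A) := fun i => ℛ k (ra.left i)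
  let raR : (i : ra.ι) → Coalgebra.Repr k (ra.right i) (A × A) := fun i => ℛ k (ra.right i)
  have key := Coalgebra.sum_tmul_tmul_eq ra raL raR
  let m2 : A ⊗[k] A →ₗ[k] A := (LinearMap.mul' k A) ∘ₗ (TensorProduct.map S LinearMap.id)
  let Ξ : A ⊗[k] (A ⊗[k] A) →ₗ[k] A :=
    (LinearMap.mul' k A) ∘ₗ (TensorProduct.map (S ∘ₗ S) m2)
  have hΞ : ∀ x y z : A, Ξ (x ⊗ₜ (y ⊗ₜ z)) = S (S x) * (S y * z) := by
    intro x y z; simp [Ξ, m2]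
  have h2 := congrArg Ξ key
  simp only [map_sum, hΞ] at h2
  have eval1 : ∑ i ∈ ra.index, ∑ j ∈ (raL i).index,
      S (S ((raL i).left j)) * (S ((raL i).right j) * ra.right i) = a := by
    calc ∑ i ∈ ra.index, ∑ j ∈ (raL i).index,
          S (S ((raL i).left j)) * (S ((raL i).right j) * ra.right i)
        = ∑ i ∈ ra.index, (∑ j ∈ (raL i).index,
            S (S ((raL i).left j) * (raL i).right j)) * ra.right i := by
          refine Finset.sum_congr rfl fun i _ => ?_
          rw [Finset.sum_mul]
          refine Finset.sum_congr rfl fun j _ => ?_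
          rw [_root_.antipode_mul]
          ring
      _ = ∑ i ∈ ra.index, (S (∑ j ∈ (raL i).index,
            S ((raL i).left j) * (raL i).right j)) * ra.right i := by
          refine Finset.sum_congr rfl fun i _ => ?_
          rw [map_sum]
      _ = ∑ i ∈ ra.index, Coalgebra.counit (R := k) (ra.left i) • ra.right i := by
          refine Finset.sum_congr rfl fun i _ => ?_
          rw [hS, HopfAlgebra.sum_antipode_mul_eq_smul (raL i)]
          rw [map_smul, ← hS, _root_.antipode_one, smul_mul_assoc, one_mul]
      _ = a := _root_.sum_counit_smul ra
  have eval2 : ∑ i ∈ ra.index, ∑ j ∈ (raR i).index,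
      S (S (ra.left i)) * (S ((raR i).left j) * (raR i).right j) = S (S a) := by
    calc ∑ i ∈ ra.index, ∑ j ∈ (raR i).index,
          S (S (ra.left i)) * (S ((raR i).left j) * (raR i).right j)
        = ∑ i ∈ ra.index, S (S (ra.left i)) * (∑ j ∈ (raR i).index,
            S ((raR i).left j) * (raR i).right j) := by
          refine Finset.sum_congr rfl fun i _ => ?_
          rw [Finset.mul_sum]
      _ = ∑ i ∈ ra.index, Coalgebra.counit (R := k) (ra.right i) • S (S (ra.left i)) := by
          refine Finset.sum_congr rfl fun i _ => ?_
          rw [hS, HopfAlgebra.sum_antipode_mul_eq_smul (raR i)]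
          rw [mul_smul_comm, mul_one]
      _ = S (S a) := by
          have h1 := congrArg (S ∘ₗ S) (sum_smul_counit ra)
          rw [map_sum] at h1
          simp only [map_smul, LinearMap.comp_apply] at h1
          exact h1
  rw [← eval2, ← h2, eval1]

/-! ### Contraction operators -/

variable (k A) in
/-- `CL f (x ⊗ y) = f x • y` -/
noncomputable def CL (f : Module.Dual k A) : A ⊗[k] A →ₗ[k] A :=
  (TensorProduct.lid k A).toLinearMap ∘ₗ (f.rTensor A)

variable (k A) in
/-- `CR f (x ⊗ y) = f y • x` -/
noncomputable def CR (f : Module.Dual k A) : A ⊗[k] A →ₗ[k] A :=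
  (TensorProduct.rid k A).toLinearMap ∘ₗ (TensorProduct.map LinearMap.id f)

@[simp] lemma CL_tmul (f : Module.Dual k A) (x y : A) : CL k A f (x ⊗ₜ y) = f x • y := by
  simp [CL]

@[simp] lemma CR_tmul (f : Module.Dual k A) (x y : A) : CR k A f (x ⊗ₜ y) = f y • x := by
  simp [CR]

lemma CL_one_mul (f : Module.Dual k A) (a : A) (w : A ⊗[k] A) :
    CL k A f (((1:A) ⊗ₜ[k] a) * w) = a * CL k A f w := by
  induction w using TensorProduct.induction_on with
  | zero => simp
  | tmul x y => simp [Algebra.TensorProduct.tmul_mul_tmul, mul_smul_comm]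
  | add u v hu hv => rw [mul_add, map_add, hu, hv, map_add, mul_add]

lemma CL_mul_one (f : Module.Dual k A) (x₀ : A) (w : A ⊗[k] A) :
    CL k A f ((x₀ ⊗ₜ[k] (1:A)) * w) = CL k A (f ∘ₗ LinearMap.mulLeft k x₀) w := by
  induction w using TensorProduct.induction_on with
  | zero => simp
  | tmul x y => simp [Algebra.TensorProduct.tmul_mul_tmul]
  | add u v hu hv => rw [mul_add, map_add, hu, hv, map_add]

lemma CL_expand {ι : Type*} {Λ : A} (f : Module.Dual k A) (rT : Coalgebra.Repr k Λ ι) :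
    CL k A f (Coalgebra.comul (R := k) Λ) = ∑ j ∈ rT.index, f (rT.left j) • rT.right j := by
  rw [← rT.eq, map_sum]
  simp

/-- the ideal identity: `a • G f = G (f ∘ (S a * ·))` -/
lemma G_ideal {Λ : A} (hΛ : ∀ a : A, a * Λ = Coalgebra.counit (R := k) a • Λ)
    (f : Module.Dual k A) (a : A) :
    a * CL k A f (Coalgebra.comul (R := k) Λ) =
      CL k A (f ∘ₗ LinearMap.mulLeft k (HopfAlgebra.antipode (R := k) a))
        (Coalgebra.comul (R := k) Λ) := by
  rw [← CL_one_mul f a, mul_comm, integral_comul_mul hΛ a, mul_comm, CL_mul_one]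

/-- counit of `G f` -/
lemma G_counit {Λ : A} (f : Module.Dual k A) :
    Coalgebra.counit (R := k) (CL k A f (Coalgebra.comul (R := k) Λ)) = f Λ := by
  classical
  let rT := ℛ k Λ
  rw [CL_expand f rT, map_sum]
  simp only [map_smul, smul_eq_mul]
  rw [show ∑ j ∈ rT.index, f (rT.left j) * Coalgebra.counit (R := k) (rT.right j)
      = f (∑ j ∈ rT.index, Coalgebra.counit (R := k) (rT.right j) • rT.left j) by
    rw [map_sum]; simp [mul_comm]]
  rw [sum_smul_counit rT]

variable (k A) in
/-- convolution of two functionals -/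
noncomputable def dconv (f h : Module.Dual k A) : Module.Dual k A :=
  (LinearMap.mul' k k) ∘ₗ (TensorProduct.map f h) ∘ₗ Coalgebra.comul (R := k)

lemma dconv_apply {ι : Type*} {x : A} (f h : Module.Dual k A) (r : Coalgebra.Repr k x ι) :
    dconv k A f h x = ∑ i ∈ r.index, f (r.left i) * h (r.right i) := by
  rw [dconv, LinearMap.comp_apply, LinearMap.comp_apply, ← r.eq, map_sum, map_sum]
  simp

/-- comultiplication interacts with `G` via dual convolution (needs cocommutativity) -/
lemma G_comul
    (hcc : ∀ a : A, (TensorProduct.comm k A A) (Coalgebra.comul (R := k) a) = Coalgebra.comul (R := k) a)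
    {Λ : A} (f h : Module.Dual k A) :
    CR k A h (Coalgebra.comul (R := k) (CL k A f (Coalgebra.comul (R := k) Λ))) =
      CL k A (dconv k A f h) (Coalgebra.comul (R := k) Λ) := by
  classical
  let rT := ℛ k Λ
  let rL : (j : rT.ι) → Coalgebra.Repr k (rT.left j) (A × A) := fun j => ℛ k (rT.left j)
  let rR : (j : rT.ι) → Coalgebra.Repr k (rT.right j) (A × A) := fun j => ℛ k (rT.right j)
  have key := Coalgebra.sum_tmul_tmul_eq rT rL rR
  let inner : A ⊗[k] A →ₗ[k] A :=
    (TensorProduct.lid k A).toLinearMap ∘ₗ (TensorProduct.map h LinearMap.id)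
  let Θ : A ⊗[k] (A ⊗[k] A) →ₗ[k] A :=
    (TensorProduct.lid k A).toLinearMap ∘ₗ (TensorProduct.map f inner)
  have hΘ : ∀ x y z : A, Θ (x ⊗ₜ (y ⊗ₜ z)) = (f x * h y) • z := by
    intro x y z; simp [Θ, inner, smul_smul, mul_comm]
  have h2 := congrArg Θ key
  simp only [map_sum, hΘ] at h2
  calc CR k A h (Coalgebra.comul (R := k) (CL k A f (Coalgebra.comul (R := k) Λ)))
      = ∑ j ∈ rT.index, f (rT.left j) • CR k A h (Coalgebra.comul (R := k) (rT.right j)) := by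
        rw [CL_expand f rT]
        simp only [map_sum, map_smul]
    _ = ∑ j ∈ rT.index, ∑ l ∈ (rR j).index,
          (f (rT.left j) * h ((rR j).left l)) • (rR j).right l := by
        refine Finset.sum_congr rfl fun j _ => ?_
        rw [← sum_swap_eq_comul hcc (rR j), map_sum]
        simp only [CR_tmul]
        rw [Finset.smul_sum]
        refine Finset.sum_congr rfl fun l _ => ?_
        rw [smul_smul]
    _ = ∑ j ∈ rT.index, ∑ l ∈ (rL j).index,
          (f ((rL j).left l) * h ((rL j).right l)) • rT.right j := h2.symm
    _ = CL k A (dconv k A f h) (Coalgebra.comul (R := k) Λ) := by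
        rw [CL_expand _ rT]
        refine Finset.sum_congr rfl fun j _ => ?_
        rw [dconv_apply _ _ (rL j), Finset.sum_smul]

/-- cocommutative swap of a cointegral evaluation -/
lemma CL_comul_of_CR
    (hcc : ∀ a : A, (TensorProduct.comm k A A) (Coalgebra.comul (R := k) a) = Coalgebra.comul (R := k) a)
    (lam : Module.Dual k A)
    (hlam : ∀ x : A, CR k A lam (Coalgebra.comul (R := k) x) = lam x • 1)
    (x : A) :
    CL k A lam (Coalgebra.comul (R := k) x) = lam x • 1 := by
  classical
  let r := ℛ k x
  have h1 : CL k A lam (Coalgebra.comul (R := k) x)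
      = CR k A lam (∑ i ∈ r.index, r.right i ⊗ₜ[k] r.left i) := by
    rw [← r.eq, map_sum, map_sum]
    simp
  rw [h1, sum_swap_eq_comul hcc r, hlam x]

/-- key spanning identity -/
lemma key_span
    (hcc : ∀ a : A, (TensorProduct.comm k A A) (Coalgebra.comul (R := k) a) = Coalgebra.comul (R := k) a)
    {Λ : A} (hΛ : ∀ a : A, a * Λ = Coalgebra.counit (R := k) a • Λ)
    (lam : Module.Dual k A)
    (hlam : ∀ x : A, CR k A lam (Coalgebra.comul (R := k) x) = lam x • 1)
    (a : A) :
    CL k A (lam ∘ₗ LinearMap.mulLeft k (HopfAlgebra.antipode (R := k) a))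
        (Coalgebra.comul (R := k) Λ) = lam Λ • a := by
  rw [← G_ideal hΛ lam a, CL_comul_of_CR hcc lam hlam Λ]
  rw [mul_smul_comm, mul_one]

/-- the trace formula -/
lemma trace_formula [Module.Finite k A]
    (hcc : ∀ a : A, (TensorProduct.comm k A A) (Coalgebra.comul (R := k) a) = Coalgebra.comul (R := k) a)
    {Λ : A} (hΛ : ∀ a : A, a * Λ = Coalgebra.counit (R := k) a • Λ)
    (lam : Module.Dual k A)
    (hlam : ∀ x : A, CR k A lam (Coalgebra.comul (R := k) x) = lam x • 1) :
    lam Λ * (Module.finrank k A : k) = Coalgebra.counit (R := k) Λ * lam 1 := by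
  classical
  set S := HopfAlgebra.antipode (R := k) (A := A) with hS
  let rT := ℛ k Λ
  -- decompose lam Λ • id as a sum of rank ones
  let F : A →ₗ[k] A := ∑ j ∈ rT.index,
    dualTensorHom k A A ((lam ∘ₗ (LinearMap.mulRight k (rT.left j)) ∘ₗ S) ⊗ₜ rT.right j)
  have hF : F = lam Λ • LinearMap.id := by
    apply LinearMap.ext
    intro a
    have h := key_span hcc hΛ lam hlam a
    rw [CL_expand _ rT] at h
    simpa [F, dualTensorHom_apply] using h
  have htr1 : LinearMap.trace k A F = lam Λ * (Module.finrank k A : k) := by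
    rw [hF, map_smul, LinearMap.trace_id, smul_eq_mul]
  have htr2 : LinearMap.trace k A F = ∑ j ∈ rT.index, lam (S (rT.right j) * rT.left j) := by
    rw [map_sum]
    refine Finset.sum_congr rfl fun j _ => ?_
    rw [← LinearMap.comp_apply, LinearMap.trace_eq_contract k A]
    simp
  have hsum : ∑ j ∈ rT.index, S (rT.right j) * rT.left j
      = Coalgebra.counit (R := k) Λ • 1 := by
    exact HopfAlgebra.sum_antipode_mul_eq_smul (R := k) (swapRepr hcc rT)
  rw [← htr1, htr2]
  rw [show ∑ j ∈ rT.index, lam (S (rT.right j) * rT.left j)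
      = lam (∑ j ∈ rT.index, S (rT.right j) * rT.left j) by rw [map_sum]]
  rw [hsum, map_smul, smul_eq_mul]


/-! ### Existence of a nonzero integral -/

include k in
lemma counit_nontrivial : Nontrivial A := by
  refine ⟨1, 0, fun h => ?_⟩
  have h2 : Coalgebra.counit (R := k) (1 : A) = 0 := by rw [h, map_zero]
  rw [Bialgebra.counit_one] at h2
  exact one_ne_zero h2

lemma exists_nonzero_integral [Module.Finite k A] :
    ∃ Λ : A, Λ ≠ 0 ∧ ∀ a : A, a * Λ = Coalgebra.counit (R := k) a • Λ := by
  classical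
  have : Nontrivial A := counit_nontrivial (k := k) (A := A)
  set I : Ideal A := RingHom.ker (Bialgebra.counitAlgHom k A) with hI
  -- every a decomposes as (a - ε a • 1) + ε a • 1 with first part in I
  have hmem : ∀ a : A, a - Coalgebra.counit (R := k) a • 1 ∈ I := by
    intro a
    rw [hI, RingHom.mem_ker]
    simp [Algebra.smul_def]
  -- reduce to finding Λ ≠ 0 with I * ⟨Λ⟩ = 0
  suffices h : ∃ Λ : A, Λ ≠ 0 ∧ ∀ a ∈ I, a * Λ = 0 by
    obtain ⟨Λ, h0, hann⟩ := h
    refine ⟨Λ, h0, fun a => ?_⟩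
    have := hann _ (hmem a)
    rw [sub_mul, smul_mul_assoc, one_mul, sub_eq_zero] at this
    exact this
  -- the chain I^(n+1) stabilizes
  have hdesc : ∃ n : ℕ, I ^ (n + 1) = I ^ (n + 2) := by
    by_contra hcon
    push_neg at hcon
    set f : ℕ → ℕ := fun n =>
      Module.finrank k (Submodule.restrictScalars k (I ^ (n + 1))) with hf
    have hstrict : ∀ n, f (n + 1) < f n := by
      intro n
      have hle : (I ^ (n + 2) : Ideal A) ≤ I ^ (n + 1) :=
        Ideal.pow_le_pow_right (show n + 1 ≤ n + 2 by omega)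
      have hlt : Submodule.restrictScalars k (I ^ (n + 2)) <
          Submodule.restrictScalars k (I ^ (n + 1)) := by
        refine lt_of_le_of_ne (fun x hx => hle hx) ?_
        intro hEq
        exact (hcon n) (Submodule.restrictScalars_injective k _ _ hEq).symm
      exact Submodule.finrank_lt_finrank_of_lt hlt
    have hkey : ∀ n, f n + n ≤ f 0 := by
      intro n
      induction n with
      | zero => omega
      | succ m ih => have := hstrict m; omega
    have := hkey (f 0 + 1)
    omega
  obtain ⟨n, hn⟩ := hdesc
  set J : Ideal A := I ^ (n + 1) with hJ
  have hJI : J ≤ I := by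
    rw [hJ]
    have := Ideal.pow_le_pow_right (I := I) (show 1 ≤ n + 1 by omega)
    simpa using this
  -- J is idempotent
  have hstab : ∀ m : ℕ, I ^ (n + 1 + m) = J := by
    intro m
    induction m with
    | zero => rfl
    | succ p ih =>
        have : n + 1 + (p + 1) = (n + 1 + p) + 1 := by omega
        rw [this, pow_succ, ih]
        calc J * I = I ^ (n + 1) * I := by rw [hJ]
          _ = I ^ (n + 2) := by rw [← pow_succ]
          _ = J := by rw [← hn, hJ]
  have hJJ : J * J = J := by
    have h1 : J * J = I ^ (n + 1 + (n + 1)) := by rw [hJ, ← pow_add]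
    rw [h1, hstab]
  -- Nakayama: J is generated by an idempotent
  have hJfg : J.FG := by
    have : IsNoetherian A A := isNoetherian_of_tower k inferInstance
    exact IsNoetherian.noetherian J
  obtain ⟨r, hr1, hr0⟩ :=
    Submodule.exists_sub_one_mem_and_smul_eq_zero_of_fg_of_le_smul J J hJfg
      (by rw [Ideal.smul_eq_mul, hJJ])
  set e : A := 1 - r with he
  have heJ : e ∈ J := by
    rw [he, show (1 : A) - r = -(r - 1) by ring]
    exact neg_mem hr1
  have hxe : ∀ x ∈ J, e * x = x := by
    intro x hx
    have := hr0 x hx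
    rw [smul_eq_mul] at this
    rw [he, sub_mul, one_mul, this, sub_zero]
  -- P = span {1 - e}
  set P : Ideal A := Ideal.span {1 - e} with hP
  have hPP : P * P = P := by
    have h : ((1:A) - e) * ((1:A) - e) = 1 - e := by
      have h2 : e * e = e := hxe e heJ
      linear_combination h2
    rw [hP, Ideal.span_singleton_mul_span_singleton, h]
  have hJP : J * P = ⊥ := by
    rw [eq_bot_iff, Ideal.mul_le]
    intro x hx y hy
    rw [hP, Ideal.mem_span_singleton'] at hy
    obtain ⟨c, rfl⟩ := hy
    have hx1 : x * (1 - e) = 0 := by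
      rw [mul_sub, mul_one, mul_comm x e, hxe x hx, sub_self]
    rw [show x * (c * (1 - e)) = c * (x * (1 - e)) by ring, hx1, mul_zero]
    exact Submodule.zero_mem ⊥
  -- powers of I' = I * P
  set I' : Ideal A := I * P with hI'
  have hI'pow : ∀ m : ℕ, I' ^ (m + 1) = I ^ (m + 1) * P := by
    intro m
    induction m with
    | zero => rw [pow_one, pow_one]
    | succ p ih =>
        rw [pow_succ, ih, hI', pow_succ]
        calc I ^ (p + 1) * P * (I * P) = (I ^ (p + 1) * I) * (P * P) := by ring
          _ = I ^ (p + 2) * P := by rw [hPP, ← pow_succ]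
  have hIn2 : I ^ (n + 2) = J := by
    have := hstab 1
    rwa [show n + 1 + 1 = n + 2 from rfl] at this
  have hI'zero : I' ^ (n + 2) = ⊥ := by
    have h1 := hI'pow (n + 1)
    rw [show n + 1 + 1 = n + 2 from rfl] at h1
    rw [h1, hIn2, hJP]
  -- pick the minimal vanishing power
  have hex : ∃ m : ℕ, I' ^ (m + 1) = ⊥ := ⟨n + 1, hI'zero⟩
  -- ε e = 0 and so 1 - e ≠ 0
  have hεe : Coalgebra.counit (R := k) e = 0 := by
    have h1 : e ∈ I := hJI heJ
    rw [hI, RingHom.mem_ker] at h1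
    simpa using h1
  have hone : (1 : A) - e ≠ 0 := by
    intro h0
    have h1 : Coalgebra.counit (R := k) ((1 : A) - e) = 0 := by rw [h0, map_zero]
    rw [map_sub, Bialgebra.counit_one, hεe, sub_zero] at h1
    exact one_ne_zero h1
  obtain ⟨m₀, hzero, hmin⟩ : ∃ m : ℕ, I' ^ (m + 1) = ⊥ ∧ ∀ l, l < m → I' ^ (l + 1) ≠ ⊥ := by
    classical
    exact ⟨Nat.find hex, Nat.find_spec hex, fun l hl => Nat.find_min hex hl⟩
  cases m₀ with
  | zero =>
    refine ⟨1 - e, hone, fun a ha => ?_⟩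
    have h1 : a * (1 - e) ∈ I * P :=
      Ideal.mul_mem_mul ha (by rw [hP]; exact Ideal.subset_span rfl)
    have h2 : I * P = ⊥ := by
      rw [← hI']
      simpa using hzero
    rw [h2] at h1
    simpa using h1
  | succ m =>
    have hne : I' ^ (m + 1) ≠ ⊥ := hmin m (by omega)
    have hex2 : ∃ Λ ∈ I' ^ (m + 1), Λ ≠ 0 := by
      by_contra hcon
      push_neg at hcon
      exact hne ((Submodule.eq_bot_iff _).mpr hcon)
    obtain ⟨Λ, hΛmem, hΛ0⟩ := hex2
    refine ⟨Λ, hΛ0, fun a ha => ?_⟩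
    have h1 : a * Λ ∈ I * I' ^ (m + 1) := Ideal.mul_mem_mul ha hΛmem
    have h2 : I * I' ^ (m + 1) = I' ^ (m + 2) := by
      rw [hI'pow m, hI'pow (m + 1)]
      rw [show m + 1 + 1 = m + 2 from rfl]
      ring
    have h3 : I' ^ (m + 2) = ⊥ := by
      have h4 := hzero
      rwa [show m + 1 + 1 = m + 2 from rfl] at h4
    rw [h2, h3] at h1
    simpa using h1

/-! ### Construction of the dual pair -/

lemma CL_add (f g : Module.Dual k A) : CL k A (f + g) = CL k A f + CL k A g := by
  apply TensorProduct.ext'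
  intro x y
  simp [add_smul]

lemma CL_smul (c : k) (f : Module.Dual k A) : CL k A (c • f) = c • CL k A f := by
  apply TensorProduct.ext'
  intro x y
  simp [smul_smul]

variable (k A) in
/-- the Fourier transform attached to an element `Λ` -/
noncomputable def Gmap (Λ : A) : Module.Dual k A →ₗ[k] A where
  toFun f := CL k A f (Coalgebra.comul (R := k) Λ)
  map_add' f g := by
    show CL k A (f + g) (Coalgebra.comul (R := k) Λ) = _
    rw [CL_add]; rfl
  map_smul' c f := by
    show CL k A (c • f) (Coalgebra.comul (R := k) Λ) = _
    rw [CL_smul]; rfl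

lemma Gmap_apply (Λ : A) (f : Module.Dual k A) :
    Gmap k A Λ f = CL k A f (Coalgebra.comul (R := k) Λ) := rfl

/-- basis expansion of a tensor -/
lemma CR_basis_expand {ι : Type*} [Fintype ι] (b : Module.Basis ι k A) (w : A ⊗[k] A) :
    ∑ i, (CR k A (b.coord i) w) ⊗ₜ[k] b i = w := by
  induction w using TensorProduct.induction_on with
  | zero => simp
  | tmul x y =>
      simp only [CR_tmul]
      calc ∑ i, (b.coord i y • x) ⊗ₜ[k] b i = ∑ i, x ⊗ₜ[k] (b.coord i y • b i) := by
            refine Finset.sum_congr rfl fun i _ => ?_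
            rw [TensorProduct.smul_tmul]
        _ = x ⊗ₜ[k] ∑ i, b.repr y i • b i := by
            rw [TensorProduct.tmul_sum]
            refine Finset.sum_congr rfl fun i _ => ?_
            rw [Module.Basis.coord_apply]
        _ = x ⊗ₜ[k] y := by rw [Module.Basis.sum_repr]
  | add u v hu hv =>
      simp only [map_add, TensorProduct.add_tmul, Finset.sum_add_distrib, hu, hv]

/-- main construction: a dual pair (integral, cointegral) with `lam Λ = 1` -/
lemma exists_good_pair [Module.Finite k A]
    (hcc : ∀ a : A, (TensorProduct.comm k A A) (Coalgebra.comul (R := k) a) = Coalgebra.comul (R := k) a) :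
    ∃ (Λ : A) (lam : Module.Dual k A),
      (∀ a : A, a * Λ = Coalgebra.counit (R := k) a • Λ) ∧
      (∀ x : A, CR k A lam (Coalgebra.comul (R := k) x) = lam x • 1) ∧ lam Λ = 1 := by
  classical
  obtain ⟨Λ, hΛ0, hΛ⟩ := exists_nonzero_integral (k := k) (A := A)
  set S := HopfAlgebra.antipode (R := k) (A := A) with hS
  set G := Gmap k A Λ with hG
  -- the twisted ideal identity
  have hSG : ∀ (f : Module.Dual k A) (a : A),
      a * S (G f) = S (G (f ∘ₗ LinearMap.mulLeft k a)) := by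
    intro f a
    calc a * S (G f) = S (S a) * S (G f) := by rw [hS, antipode_antipode]
      _ = S (S a * G f) := by rw [hS, ← _root_.antipode_mul]
      _ = S (G (f ∘ₗ LinearMap.mulLeft k (S (S a)))) := by
          rw [hG, Gmap_apply, Gmap_apply, ← G_ideal hΛ f (S a)]
      _ = S (G (f ∘ₗ LinearMap.mulLeft k a)) := by rw [hS, antipode_antipode]
  -- the image ideal
  set J : Ideal A :=
    { carrier := Set.range (fun f : Module.Dual k A => S (G f)),
      add_mem' := by
        rintro x y ⟨f, rfl⟩ ⟨g, rfl⟩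
        exact ⟨f + g, by show S (G (f + g)) = _; rw [map_add, map_add]⟩
      zero_mem' := ⟨0, by show S (G 0) = 0; rw [map_zero, map_zero]⟩
      smul_mem' := by
        rintro a x ⟨f, rfl⟩
        refine ⟨f ∘ₗ LinearMap.mulLeft k a, ?_⟩
        show S (G (f ∘ₗ LinearMap.mulLeft k a)) = a • S (G f)
        rw [← hSG, smul_eq_mul] } with hJ
  have hmemJ : ∀ x : A, x ∈ J ↔ ∃ f : Module.Dual k A, S (G f) = x := by
    intro x; rfl
  -- 1 ∈ J
  have hone : (1 : A) ∈ J := by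
    -- pick f₀ with f₀ Λ = 1
    have hf : ∃ f : Module.Dual k A, f Λ ≠ 0 := by
      by_contra hcon
      push_neg at hcon
      exact hΛ0 ((Module.forall_dual_apply_eq_zero_iff k Λ).mp hcon)
    obtain ⟨f, hf⟩ := hf
    set f₀ : Module.Dual k A := (f Λ)⁻¹ • f with hf₀
    have hf₀Λ : f₀ Λ = 1 := by
      rw [hf₀]; simp [inv_mul_cancel₀ hf]
    set x : A := G f₀ with hx
    have hεx : Coalgebra.counit (R := k) x = 1 := by
      rw [hx, hG, Gmap_apply, G_counit, hf₀Λ]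
    let b := Module.Free.chooseBasis k A
    let rX : Coalgebra.Repr k x (Module.Free.ChooseBasisIndex k A) :=
      { index := Finset.univ
        left := fun i => CR k A (b.coord i) (Coalgebra.comul (R := k) x)
        right := fun i => b i
        eq := CR_basis_expand b (Coalgebra.comul (R := k) x) }
    have hxsum := HopfAlgebra.sum_antipode_mul_eq_smul (R := k) rX
    rw [hεx, one_smul] at hxsum
    rw [← hxsum]
    refine Submodule.sum_mem J fun i _ => ?_
    have hcoef : rX.left i = G (dconv k A f₀ (b.coord i)) := by
      show CR k A (b.coord i) (Coalgebra.comul (R := k) x) = _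
      rw [hx, hG, Gmap_apply, Gmap_apply, G_comul hcc]
    have : S (rX.left i) * rX.right i = rX.right i * S (G (dconv k A f₀ (b.coord i))) := by
      rw [hcoef, mul_comm]
    rw [this, hSG]
    exact ⟨_, rfl⟩
  obtain ⟨lam, hGlam⟩ := (hmemJ 1).mp hone
  -- G lam = 1 and lam Λ = 1
  have hGlam1 : G lam = 1 := by
    have := congrArg S hGlam
    rw [hS, antipode_antipode] at this
    rw [this]
    exact _root_.antipode_one
  have hlamΛ : lam Λ = 1 := by
    have := G_counit (k := k) (Λ := Λ) lam
    rw [← Gmap_apply, ← hG, hGlam1, Bialgebra.counit_one] at this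
    exact this.symm
  -- GS = S ∘ G is surjective, hence injective
  set GS : Module.Dual k A →ₗ[k] A := S ∘ₗ G with hGS
  have hsurj : Function.Surjective GS := by
    intro a
    refine ⟨lam ∘ₗ LinearMap.mulLeft k a, ?_⟩
    rw [hGS, LinearMap.comp_apply, ← hSG, hGlam, mul_one]
  have hinj : Function.Injective GS := by
    have hfr : Module.finrank k (Module.Dual k A) = Module.finrank k A :=
      Subspace.dual_finrank_eq
    exact (LinearMap.injective_iff_surjective_of_finrank_eq_finrank hfr).mpr hsurj
  -- convolution identity
  have hconv : ∀ h : Module.Dual k A, dconv k A lam h = h 1 • lam := by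
    intro h
    apply hinj
    have h1 : GS (dconv k A lam h) = h 1 • (1 : A) := by
      rw [hGS, LinearMap.comp_apply, hG, Gmap_apply, ← G_comul hcc, ← Gmap_apply, ← hG, hGlam1]
      rw [Bialgebra.comul_one]
      rw [show ((1 : A ⊗[k] A)) = (1:A) ⊗ₜ[k] (1:A) from rfl]
      rw [CR_tmul, map_smul, hS, _root_.antipode_one]
    rw [h1, map_smul, hGS, LinearMap.comp_apply, hGlam]
  -- the cointegral property
  refine ⟨Λ, lam, hΛ, fun x => ?_, hlamΛ⟩
  have hsep : ∀ h : Module.Dual k A,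
      h (CR k A lam (Coalgebra.comul (R := k) x)) = h (lam x • 1) := by
    intro h
    have h1 : h (CR k A lam (Coalgebra.comul (R := k) x))
        = dconv k A lam h x := by
      let rx := ℛ k x
      rw [dconv_apply lam h (swapRepr hcc rx)]
      rw [show Coalgebra.comul (R := k) x = ∑ i ∈ rx.index, rx.left i ⊗ₜ[k] rx.right i from rx.eq.symm]
      rw [map_sum, map_sum]
      simp only [CR_tmul, map_smul]
      refine Finset.sum_congr rfl fun i _ => ?_
      rw [smul_eq_mul]
      rfl
    rw [h1, hconv h]
    simp only [LinearMap.smul_apply, map_smul, smul_eq_mul]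
    ring
  have hzero : ∀ h : Module.Dual k A,
      h (CR k A lam (Coalgebra.comul (R := k) x) - lam x • 1) = 0 := by
    intro h; rw [map_sub, hsep h, sub_self]
  have := (Module.forall_dual_apply_eq_zero_iff k _).mp hzero
  rw [sub_eq_zero] at this
  exact this


lemma CR_smul (c : k) (f : Module.Dual k A) : CR k A (c • f) = c • CR k A f := by
  apply TensorProduct.ext'
  intro x y
  simp [smul_smul]

end Tools

/-- A bicommutative Hopf algebra has a finite volume if and only if it is finite-dimensional
and the image of its dimension in the ground field is nonzero. -/
theorem finite_volume_iff_finiteDimensional_finrank_ne_zero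
    (k A : Type*) [Field k] [CommRing A] [HopfAlgebra k A] (hcc : IsCocomm k A) :
    (∃ (σ : A) (lam : A →ₗ[k] k),
        IsNormalizedIntegral k A σ ∧ IsNormalizedCointegral k A lam ∧ lam σ ≠ 0) ↔
      (FiniteDimensional k A ∧ (Module.finrank k A : k) ≠ 0) := by
  classical
  have hcc' : ∀ a : A, (TensorProduct.comm k A A) (Coalgebra.comul (R := k) a)
      = Coalgebra.comul (R := k) a := hcc
  constructor
  · rintro ⟨σ, lam, ⟨hint, hεσ⟩, ⟨hlam1, hco⟩, hne⟩
    have hco' : ∀ x : A, CR k A lam (Coalgebra.comul (R := k) x) = lam x • 1 :=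
      fun x => hco x
    have hfin : Module.Finite k A := by
      let rT := Coalgebra.Repr.arbitrary k σ
      have hkey := key_span hcc' hint lam hco'
      constructor
      refine ⟨rT.index.image rT.right, ?_⟩
      rw [eq_top_iff]
      intro a _
      have h1 := hkey a
      rw [CL_expand _ rT] at h1
      have h2 : a = (lam σ)⁻¹ • ∑ j ∈ rT.index,
          (lam ∘ₗ LinearMap.mulLeft k (HopfAlgebra.antipode (R := k) a)) (rT.left j)
            • rT.right j := by
        rw [h1, smul_smul, inv_mul_cancel₀ hne, one_smul]
      rw [h2]
      refine Submodule.smul_mem _ _ (Submodule.sum_mem _ fun j hj =>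
        Submodule.smul_mem _ _ (Submodule.subset_span ?_))
      simp only [Finset.coe_image, Set.mem_image, Finset.mem_coe]
      exact ⟨j, hj, rfl⟩
    haveI := hfin
    have htr := trace_formula hcc' hint lam hco'
    rw [hεσ, hlam1, one_mul] at htr
    refine ⟨hfin, fun h0 => ?_⟩
    rw [h0, mul_zero] at htr
    exact one_ne_zero htr.symm
  · rintro ⟨hfd, hN⟩
    haveI : Module.Finite k A := hfd
    obtain ⟨Λ, lam, hΛ, hco, hlamΛ⟩ := exists_good_pair hcc'
    have htr := trace_formula hcc' hΛ lam hco
    rw [hlamΛ, one_mul] at htr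
    have hε0 : Coalgebra.counit (R := k) Λ ≠ 0 := by
      intro h; rw [h, zero_mul] at htr; exact hN htr
    have hl0 : lam 1 ≠ 0 := by
      intro h; rw [h, mul_zero] at htr; exact hN htr
    refine ⟨(Coalgebra.counit (R := k) Λ)⁻¹ • Λ, (lam 1)⁻¹ • lam, ⟨?_, ?_⟩, ⟨?_, ?_⟩, ?_⟩
    · intro a
      rw [mul_smul_comm, hΛ a, smul_comm]
    · rw [map_smul, smul_eq_mul, inv_mul_cancel₀ hε0]
    · rw [LinearMap.smul_apply, smul_eq_mul, inv_mul_cancel₀ hl0]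
    · intro a
      have h1 : CR k A ((lam 1)⁻¹ • lam) (Coalgebra.comul (R := k) a)
          = ((lam 1)⁻¹ • lam) a • 1 := by
        rw [CR_smul, LinearMap.smul_apply, hco a]
        rw [smul_smul, LinearMap.smul_apply, smul_eq_mul]
      exact h1
    · rw [LinearMap.smul_apply, map_smul, smul_eq_mul, smul_eq_mul, hlamΛ, mul_one]
      exact mul_ne_zero (inv_ne_zero hl0) (inv_ne_zero hε0)
end

section
/- Let k be a field and let A, B be bicommutative Hopf algebras over k. Equip A ⊗[k] B with its standard tensor-product Hopf algebra structure. If A ⊗[k] B has a finite volume (i.e. admits a normalized integral σ and a normalized cointegral λ with λ(σ) ≠ 0), then both A and B have a finite volume. -/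
open TensorProduct

universe u

set_option synthInstance.maxHeartbeats 400000
set_option maxHeartbeats 1000000

namespace FinVolAux
variable (k A B : Type u) [CommRing k] [CommRing A] [CommRing B] [Bialgebra k A] [Bialgebra k B]

noncomputable def piA : A ⊗[k] B →ₐ[k] A :=
  (Algebra.TensorProduct.rid k k A).toAlgHom.comp
    (Algebra.TensorProduct.map (AlgHom.id k A) (Bialgebra.counitAlgHom k B))

noncomputable def piB : A ⊗[k] B →ₐ[k] B :=
  (Algebra.TensorProduct.lid k B).toAlgHom.comp
    (Algebra.TensorProduct.map (Bialgebra.counitAlgHom k A) (AlgHom.id k B))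

variable {k A B}

@[simp] lemma piA_tmul (a : A) (b : B) :
    piA k A B (a ⊗ₜ b) = Coalgebra.counit (R := k) b • a := by simp [piA]

@[simp] lemma piB_tmul (a : A) (b : B) :
    piB k A B (a ⊗ₜ b) = Coalgebra.counit (R := k) a • b := by simp [piB]

lemma counit_tmul (a : A) (b : B) : Coalgebra.counit (R := k) (a ⊗ₜ[k] b)
    = Coalgebra.counit (R := k) a * Coalgebra.counit (R := k) b := by
  simp [mul_comm]

lemma comul_tmul (a : A) (b : B) : Coalgebra.comul (R := k) (a ⊗ₜ[k] b)
    = TensorProduct.tensorTensorTensorComm k A A B B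
        (Coalgebra.comul (R := k) a ⊗ₜ Coalgebra.comul (R := k) b) := by
  simp [AlgebraTensorModule.tensorTensorTensorComm_eq]

lemma counit_piA (x : A ⊗[k] B) :
    Coalgebra.counit (R := k) (piA k A B x) = Coalgebra.counit (R := k) x := by
  induction x using TensorProduct.induction_on with
  | zero => simp
  | tmul a b => simp [counit_tmul, mul_comm]
  | add x y hx hy => simp [map_add, hx, hy]

lemma counit_piB (x : A ⊗[k] B) :
    Coalgebra.counit (R := k) (piB k A B x) = Coalgebra.counit (R := k) x := by
  induction x using TensorProduct.induction_on with
  | zero => simp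
  | tmul a b => simp [counit_tmul, mul_comm]
  | add x y hx hy => simp [map_add, hx, hy]

/-- Pushing a normalized integral along `piA`. -/
lemma integral_piA {σ : A ⊗[k] B} (hσ : IsNormalizedIntegral k (A ⊗[k] B) σ) :
    IsNormalizedIntegral k A (piA k A B σ) := by
  refine ⟨fun a => ?_, by rw [counit_piA]; exact hσ.2⟩
  have h1 : piA k A B ((a ⊗ₜ (1 : B)) * σ) = a * piA k A B σ := by
    rw [map_mul]; simp [Bialgebra.counit_one]
  rw [← h1, hσ.1, map_smul, counit_tmul]
  simp [Bialgebra.counit_one]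

lemma integral_piB {σ : A ⊗[k] B} (hσ : IsNormalizedIntegral k (A ⊗[k] B) σ) :
    IsNormalizedIntegral k B (piB k A B σ) := by
  refine ⟨fun b => ?_, by rw [counit_piB]; exact hσ.2⟩
  have h1 : piB k A B (((1 : A) ⊗ₜ b) * σ) = b * piB k A B σ := by
    rw [map_mul]; simp [Bialgebra.counit_one]
  rw [← h1, hσ.1, map_smul, counit_tmul]
  simp [Bialgebra.counit_one]

/-- Uniqueness of normalized integrals in a commutative bialgebra. -/
lemma integral_unique {σ σ' : A} (h : IsNormalizedIntegral k A σ)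
    (h' : IsNormalizedIntegral k A σ') : σ = σ' := by
  have e1 : σ' * σ = σ := by rw [h.1 σ', h'.2, one_smul]
  have e2 : σ * σ' = σ' := by rw [h'.1 σ, h.2, one_smul]
  rw [← e1, mul_comm, e2]

/-- `σa ⊗ σb` is a normalized integral of `A ⊗ B`. -/
lemma integral_tmul {σa : A} {σb : B} (ha : IsNormalizedIntegral k A σa)
    (hb : IsNormalizedIntegral k B σb) :
    IsNormalizedIntegral k (A ⊗[k] B) (σa ⊗ₜ σb) := by
  constructor
  · intro x
    induction x using TensorProduct.induction_on with
    | zero => simp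
    | tmul a b =>
        rw [Algebra.TensorProduct.tmul_mul_tmul, ha.1, hb.1, counit_tmul, smul_tmul',
          tmul_smul, smul_tmul', smul_smul, mul_comm]
    | add x y hx hy => rw [add_mul, hx, hy, map_add, add_smul]
  · rw [counit_tmul, ha.2, hb.2, one_mul]


section Key
variable (lam : A ⊗[k] B →ₗ[k] k)

/-- Key computation: pushing the cointegral identity through `piA`. -/
lemma keyA (t : B ⊗[k] B) (s : A ⊗[k] A) :
    piA k A B ((TensorProduct.rid k (A ⊗[k] B)) (TensorProduct.map LinearMap.id lam
        (TensorProduct.tensorTensorTensorComm k A A B B (s ⊗ₜ t)))) =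
    (TensorProduct.rid k A) (TensorProduct.map LinearMap.id
        (lam ∘ₗ (TensorProduct.mk k A B).flip
          ((TensorProduct.lid k B) (LinearMap.rTensor B (Coalgebra.counit (R := k)) t))) s) := by
  induction s using TensorProduct.induction_on with
  | zero => simp
  | add x y hx hy => simp only [add_tmul, map_add, hx, hy]
  | tmul u v =>
      rw [map_tmul, rid_tmul, LinearMap.id_coe, id_eq, LinearMap.comp_apply,
        LinearMap.flip_apply, mk_apply]
      induction t using TensorProduct.induction_on with
      | zero => simp
      | add x y hx hy =>
          simp only [tmul_add, map_add, add_smul, hx, hy]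
      | tmul y1 y2 =>
          rw [tensorTensorTensorComm_tmul, map_tmul, rid_tmul, LinearMap.id_coe, id_eq,
            map_smul, piA_tmul, LinearMap.rTensor_tmul, lid_tmul, tmul_smul, map_smul,
            smul_eq_mul, smul_smul, mul_comm]

lemma keyB (s : A ⊗[k] A) (t : B ⊗[k] B) :
    piB k A B ((TensorProduct.rid k (A ⊗[k] B)) (TensorProduct.map LinearMap.id lam
        (TensorProduct.tensorTensorTensorComm k A A B B (s ⊗ₜ t)))) =
    (TensorProduct.rid k B) (TensorProduct.map LinearMap.id
        (lam ∘ₗ (TensorProduct.mk k A B)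
          ((TensorProduct.lid k A) (LinearMap.rTensor A (Coalgebra.counit (R := k)) s))) t) := by
  induction t using TensorProduct.induction_on with
  | zero => simp
  | add x y hx hy =>
      simp only [tmul_add, map_add, hx, hy]
  | tmul y1 y2 =>
      rw [map_tmul, rid_tmul, LinearMap.id_coe, id_eq, LinearMap.comp_apply, mk_apply]
      induction s using TensorProduct.induction_on with
      | zero => simp
      | add x y hx hy =>
          simp only [add_tmul, map_add, add_smul, hx, hy]
      | tmul u v =>
          rw [tensorTensorTensorComm_tmul, map_tmul, rid_tmul, LinearMap.id_coe, id_eq,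
            map_smul, piB_tmul, LinearMap.rTensor_tmul, lid_tmul, ← smul_tmul', map_smul,
            smul_eq_mul, smul_smul, mul_comm]

/-- Slices of a cointegral of `A ⊗ B` satisfy the cointegral identity on `A`. -/
lemma cointegral_sliceA (hlam : IsNormalizedCointegral k (A ⊗[k] B) lam) (y : B) (a : A) :
    (TensorProduct.rid k A) (TensorProduct.map LinearMap.id
        (lam ∘ₗ (TensorProduct.mk k A B).flip y) (Coalgebra.comul (R := k) a))
      = lam (a ⊗ₜ y) • (1 : A) := by
  have h1 := hlam.2 (a ⊗ₜ y)
  rw [comul_tmul] at h1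
  have h2 := keyA lam (Coalgebra.comul (R := k) y) (Coalgebra.comul (R := k) a)
  rw [Coalgebra.rTensor_counit_comul, lid_tmul, one_smul] at h2
  rw [← h2, h1, map_smul, map_one]

lemma cointegral_sliceB (hlam : IsNormalizedCointegral k (A ⊗[k] B) lam) (x : A) (b : B) :
    (TensorProduct.rid k B) (TensorProduct.map LinearMap.id
        (lam ∘ₗ (TensorProduct.mk k A B) x) (Coalgebra.comul (R := k) b))
      = lam (x ⊗ₜ b) • (1 : B) := by
  have h1 := hlam.2 (x ⊗ₜ b)
  rw [comul_tmul] at h1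
  have h2 := keyB lam (Coalgebra.comul (R := k) x) (Coalgebra.comul (R := k) b)
  rw [Coalgebra.rTensor_counit_comul, lid_tmul, one_smul] at h2
  rw [← h2, h1, map_smul, map_one]

end Key

/-- Exchange lemma for two functionals satisfying the cointegral identity,
using cocommutativity. -/
lemma exchange (hA : IsCocomm k A) {mu mu' : A →ₗ[k] k}
    (hmu : ∀ a : A, (TensorProduct.rid k A) (TensorProduct.map LinearMap.id mu
        (Coalgebra.comul (R := k) a)) = mu a • (1 : A))
    (hmu' : ∀ a : A, (TensorProduct.rid k A) (TensorProduct.map LinearMap.id mu'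
        (Coalgebra.comul (R := k) a)) = mu' a • (1 : A))
    (a : A) : mu a * mu' 1 = mu' a * mu 1 := by
  have key : ∀ z : A ⊗[k] A,
      mu' ((TensorProduct.rid k A) (TensorProduct.map LinearMap.id mu z)) =
      mu ((TensorProduct.rid k A) (TensorProduct.map LinearMap.id mu'
        ((TensorProduct.comm k A A) z))) := by
    intro z
    induction z using TensorProduct.induction_on with
    | zero => simp
    | add x y hx hy => simp only [map_add, hx, hy]
    | tmul u v =>
        simp only [map_tmul, comm_tmul, rid_tmul, LinearMap.id_coe, id_eq, map_smul,
          smul_eq_mul]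
        ring
  have h1 : mu a * mu' 1 = mu' (mu a • (1 : A)) := by
    rw [map_smul, smul_eq_mul]
  rw [h1, ← hmu a, key, hA a, hmu' a, map_smul, smul_eq_mul]

end FinVolAux

open FinVolAux

/-- If the tensor product `A ⊗[k] B` of two bicommutative Hopf algebras (with its standard
tensor-product Hopf algebra structure) has a finite volume, then so do `A` and `B`. -/
theorem finite_volume_of_tensor_finite_volume
    (k A B : Type u) [Field k] [CommRing A] [CommRing B]
    [HopfAlgebra k A] [HopfAlgebra k B] (hA : IsCocomm k A) (hB : IsCocomm k B)
    (h : ∃ (σ : A ⊗[k] B) (lam : A ⊗[k] B →ₗ[k] k),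
        IsNormalizedIntegral k (A ⊗[k] B) σ ∧ IsNormalizedCointegral k (A ⊗[k] B) lam ∧
          lam σ ≠ 0) :
    (∃ (σa : A) (lama : A →ₗ[k] k),
        IsNormalizedIntegral k A σa ∧ IsNormalizedCointegral k A lama ∧ lama σa ≠ 0) ∧
    (∃ (σb : B) (lamb : B →ₗ[k] k),
        IsNormalizedIntegral k B σb ∧ IsNormalizedCointegral k B lamb ∧ lamb σb ≠ 0) := by
  obtain ⟨σ, lam, hσ, hlam, hne⟩ := h
  set σa := piA k A B σ with hσa_def
  set σb := piB k A B σ with hσb_def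
  have hσa : IsNormalizedIntegral k A σa := integral_piA hσ
  have hσb : IsNormalizedIntegral k B σb := integral_piB hσ
  have hσab : σ = σa ⊗ₜ σb := integral_unique hσ (integral_tmul hσa hσb)
  -- the A side
  have one_tmul_one : (1 : A ⊗[k] B) = (1 : A) ⊗ₜ (1 : B) := rfl
  constructor
  · set lama : A →ₗ[k] k := lam ∘ₗ (TensorProduct.mk k A B).flip 1 with hlama_def
    have lama_apply : ∀ a : A, lama a = lam (a ⊗ₜ 1) := fun a => rfl
    have hlama : IsNormalizedCointegral k A lama := by
      refine ⟨?_, fun a => cointegral_sliceA lam hlam 1 a⟩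
      rw [lama_apply, ← one_tmul_one, hlam.1]
    set mu : A →ₗ[k] k := lam ∘ₗ (TensorProduct.mk k A B).flip σb with hmu_def
    have hmu : ∀ a : A, (TensorProduct.rid k A) (TensorProduct.map LinearMap.id mu
        (Coalgebra.comul (R := k) a)) = mu a • (1 : A) :=
      fun a => cointegral_sliceA lam hlam σb a
    have hexch := exchange hA hmu hlama.2 σa
    have hmuσa : mu σa = lam σ := by rw [hσab]; rfl
    refine ⟨σa, lama, hσa, hlama, fun h0 => hne ?_⟩
    have hfac : lam σ = lama σa * mu 1 := by
      rw [← hmuσa, ← hexch, hlama.1, mul_one]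
    rw [hfac, h0, zero_mul]
  · set lamb : B →ₗ[k] k := lam ∘ₗ (TensorProduct.mk k A B) 1 with hlamb_def
    have lamb_apply : ∀ b : B, lamb b = lam (1 ⊗ₜ b) := fun b => rfl
    have hlamb : IsNormalizedCointegral k B lamb := by
      refine ⟨?_, fun b => cointegral_sliceB lam hlam 1 b⟩
      rw [lamb_apply, ← one_tmul_one, hlam.1]
    set nu : B →ₗ[k] k := lam ∘ₗ (TensorProduct.mk k A B) σa with hnu_def
    have hnu : ∀ b : B, (TensorProduct.rid k B) (TensorProduct.map LinearMap.id nu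
        (Coalgebra.comul (R := k) b)) = nu b • (1 : B) :=
      fun b => cointegral_sliceB lam hlam σa b
    have hexch := exchange hB hnu hlamb.2 σb
    have hnuσb : nu σb = lam σ := by rw [hσab]; rfl
    refine ⟨σb, lamb, hσb, hlamb, fun h0 => hne ?_⟩
    have hfac : lam σ = lamb σb * nu 1 := by
      rw [← hnuσb, ← hexch, hlamb.1, mul_one]
    rw [hfac, h0, zero_mul]
end

section
/- Let k be a field of characteristic 2 and let A be a bicommutative Hopf algebra over k with a finite volume (i.e. admitting a normalized integral σ and a normalized cointegral λ with λ(σ) ≠ 0). Then the image of the dimension of A in k equals 1, i.e. (Module.finrank k A : k) = 1; equivalently, dim_k A is odd. -/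
open TensorProduct

noncomputable section FinVolAux

open Coalgebra HopfAlgebra

namespace FinVolAux

variable {k A : Type*} [Field k] [CommRing A] [HopfAlgebra k A]

local notation "S" => HopfAlgebra.antipode (R := k) (A := A)
local notation "Δ" => Coalgebra.comul (R := k) (A := A)
local notation "ε" => Coalgebra.counit (R := k) (A := A)

/-- `(id ⊗ lam)` followed by the right unitor. -/
def L (lam : A →ₗ[k] k) : A ⊗[k] A →ₗ[k] A :=
  (TensorProduct.rid k A).toLinearMap ∘ₗ TensorProduct.map LinearMap.id lam

@[simp] lemma L_tmul (lam : A →ₗ[k] k) (x y : A) : L lam (x ⊗ₜ[k] y) = lam y • x := by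
  simp [L]

lemma L_mul_left (lam : A →ₗ[k] k) (c : A) (t : A ⊗[k] A) :
    c * L lam t = L lam ((c ⊗ₜ[k] (1 : A)) * t) := by
  induction t with
  | zero => simp
  | tmul x y => simp [Algebra.TensorProduct.tmul_mul_tmul, mul_smul_comm]
  | add u v hu hv => simp only [map_add, mul_add, hu, hv]

lemma sum_counit_left_smul (a : A) {ι : Type*} (T : Coalgebra.Repr k a ι) :
    ∑ i ∈ T.index, ε (T.left i) • T.right i = a := by
  have h := congrArg (TensorProduct.lid k A) (Coalgebra.sum_counit_tmul_eq T)
  simp only [map_sum, TensorProduct.lid_tmul, one_smul] at h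
  exact h

lemma sum_counit_right_smul (a : A) {ι : Type*} (T : Coalgebra.Repr k a ι) :
    ∑ i ∈ T.index, ε (T.right i) • T.left i = a := by
  have h := congrArg (TensorProduct.rid k A) (Coalgebra.sum_tmul_counit_eq T)
  simp only [map_sum, TensorProduct.rid_tmul, one_smul] at h
  exact h

/-- Sweedler: `∑ (S a₁ ⊗ 1) Δ a₂ = 1 ⊗ a`. -/
lemma keyJ (a : A) {ι : Type*} (T : Coalgebra.Repr k a ι) :
    ∑ i ∈ T.index, ((S (T.left i)) ⊗ₜ[k] (1 : A)) * Δ (T.right i) = (1 : A) ⊗ₜ[k] a := by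
  classical
  have h3 := Coalgebra.sum_tmul_tmul_eq T (fun i => ℛ k (T.left i)) (fun i => ℛ k (T.right i))
  let Θ : A ⊗[k] (A ⊗[k] A) →ₗ[k] A ⊗[k] A :=
    ((LinearMap.mul' k A).rTensor A) ∘ₗ
      ((TensorProduct.assoc k A A A).symm : A ⊗[k] (A ⊗[k] A) ≃ₗ[k] (A ⊗[k] A) ⊗[k] A) ∘ₗ
      ((HopfAlgebra.antipode (R := k)).rTensor (A ⊗[k] A))
  have hΘ : ∀ x y z : A, Θ (x ⊗ₜ[k] (y ⊗ₜ[k] z)) = ((S x) * y) ⊗ₜ[k] z := by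
    intro x y z
    simp [Θ, LinearMap.rTensor_tmul, TensorProduct.assoc_symm_tmul]
  have h4 := congrArg Θ h3
  simp only [map_sum, hΘ] at h4
  have h5 : ∀ i ∈ T.index,
      ∑ j ∈ (ℛ k (T.left i)).index,
        ((S ((ℛ k (T.left i)).left j)) * (ℛ k (T.left i)).right j) ⊗ₜ[k] T.right i
      = (1 : A) ⊗ₜ[k] (ε (T.left i) • T.right i) := by
    intro i _
    rw [← TensorProduct.sum_tmul, HopfAlgebra.sum_antipode_mul_eq_smul (ℛ k (T.left i)),
      TensorProduct.smul_tmul]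
  rw [Finset.sum_congr rfl h5, ← TensorProduct.tmul_sum, sum_counit_left_smul] at h4
  calc ∑ i ∈ T.index, ((S (T.left i)) ⊗ₜ[k] (1 : A)) * Δ (T.right i)
      = ∑ i ∈ T.index, ∑ j ∈ (ℛ k (T.right i)).index,
          ((S (T.left i)) * (ℛ k (T.right i)).left j) ⊗ₜ[k] (ℛ k (T.right i)).right j := by
        refine Finset.sum_congr rfl fun i _ => ?_
        rw [← (ℛ k (T.right i)).eq, Finset.mul_sum]
        simp [Algebra.TensorProduct.tmul_mul_tmul]
    _ = (1 : A) ⊗ₜ[k] a := h4.symm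

/-- Sweedler: `∑ Δ a₁ * (1 ⊗ S a₂) = a ⊗ 1`. -/
lemma keyJ4 (a : A) {ι : Type*} (T : Coalgebra.Repr k a ι) :
    ∑ i ∈ T.index, Δ (T.left i) * ((1 : A) ⊗ₜ[k] (S (T.right i))) = a ⊗ₜ[k] (1 : A) := by
  classical
  have h3 := Coalgebra.sum_tmul_tmul_eq T (fun i => ℛ k (T.left i)) (fun i => ℛ k (T.right i))
  let Θ : A ⊗[k] (A ⊗[k] A) →ₗ[k] A ⊗[k] A :=
    LinearMap.lTensor A ((LinearMap.mul' k A) ∘ₗ ((HopfAlgebra.antipode (R := k)).lTensor A))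
  have hΘ : ∀ x y z : A, Θ (x ⊗ₜ[k] (y ⊗ₜ[k] z)) = x ⊗ₜ[k] (y * (S z)) := by
    intro x y z
    simp [Θ]
  have h4 := congrArg Θ h3
  simp only [map_sum, hΘ] at h4
  have h5 : ∀ i ∈ T.index,
      ∑ j ∈ (ℛ k (T.right i)).index,
        T.left i ⊗ₜ[k] ((ℛ k (T.right i)).left j * (S ((ℛ k (T.right i)).right j)))
      = (ε (T.right i) • T.left i) ⊗ₜ[k] (1 : A) := by
    intro i _
    rw [← TensorProduct.tmul_sum, HopfAlgebra.sum_mul_antipode_eq_smul (ℛ k (T.right i)),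
      TensorProduct.tmul_smul, TensorProduct.smul_tmul']
  rw [Finset.sum_congr rfl h5, ← TensorProduct.sum_tmul, sum_counit_right_smul] at h4
  calc ∑ i ∈ T.index, Δ (T.left i) * ((1 : A) ⊗ₜ[k] (S (T.right i)))
      = ∑ i ∈ T.index, ∑ j ∈ (ℛ k (T.left i)).index,
          (ℛ k (T.left i)).left j ⊗ₜ[k] ((ℛ k (T.left i)).right j * (S (T.right i))) := by
        refine Finset.sum_congr rfl fun i _ => ?_
        rw [← (ℛ k (T.left i)).eq, Finset.sum_mul]
        simp [Algebra.TensorProduct.tmul_mul_tmul]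
    _ = a ⊗ₜ[k] (1 : A) := h4

variable {σ : A} {lam : A →ₗ[k] k}

/-- `(a ⊗ 1) Δσ = (1 ⊗ S a) Δσ`. -/
lemma keyK (hσ : IsNormalizedIntegral k A σ) (a : A) :
    (a ⊗ₜ[k] (1 : A)) * Δ σ = ((1 : A) ⊗ₜ[k] (S a)) * Δ σ := by
  classical
  set T := ℛ k a with hT
  have wayB : ∑ i ∈ T.index, (Δ (T.left i) * ((1 : A) ⊗ₜ[k] (S (T.right i)))) * Δ σ
      = (a ⊗ₜ[k] (1 : A)) * Δ σ := by
    rw [← Finset.sum_mul, keyJ4 a T]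
  have wayA : ∑ i ∈ T.index, (Δ (T.left i) * ((1 : A) ⊗ₜ[k] (S (T.right i)))) * Δ σ
      = ((1 : A) ⊗ₜ[k] (S a)) * Δ σ := by
    have h1 : ∀ i ∈ T.index, (Δ (T.left i) * ((1 : A) ⊗ₜ[k] (S (T.right i)))) * Δ σ
        = ε (T.left i) • (((1 : A) ⊗ₜ[k] (S (T.right i))) * Δ σ) := by
      intro i _
      rw [mul_right_comm, ← Bialgebra.comul_mul, hσ.1, map_smul, smul_mul_assoc, mul_comm (Δ σ)]
    rw [Finset.sum_congr rfl h1]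
    have h2 : ∀ i ∈ T.index, ε (T.left i) • (((1 : A) ⊗ₜ[k] (S (T.right i))) * Δ σ)
        = (((1 : A) ⊗ₜ[k] (S (ε (T.left i) • T.right i))) * Δ σ) := by
      intro i _
      rw [map_smul, TensorProduct.tmul_smul, smul_mul_assoc]
    rw [Finset.sum_congr rfl h2, ← Finset.sum_mul, ← TensorProduct.tmul_sum, ← map_sum,
      sum_counit_left_smul]
  rw [← wayB, wayA]

/-- Braided version: `(1 ⊗ a) Δσ = (S a ⊗ 1) Δσ`, using cocommutativity. -/
lemma keyK' (hσ : IsNormalizedIntegral k A σ) (hcc : _root_.IsCocomm k A) (a : A) :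
    ((1 : A) ⊗ₜ[k] a) * Δ σ = ((S a) ⊗ₜ[k] (1 : A)) * Δ σ := by
  have e : ∀ t : A ⊗[k] A, (Algebra.TensorProduct.comm k A A) t = (TensorProduct.comm k A A) t := by
    intro t
    induction t with
    | zero => simp
    | tmul x y => simp
    | add u v hu hv => simp only [map_add, hu, hv]
  have h := congrArg (Algebra.TensorProduct.comm k A A) (keyK hσ a)
  rw [map_mul, map_mul] at h
  rw [e (Δ σ), hcc σ] at h
  simpa using h

lemma L_comul (hlam : IsNormalizedCointegral k A lam) (x : A) :
    L lam (Δ x) = lam x • (1 : A) := hlam.2 x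

/-- The antipode is an involution. -/
lemma antipode_sq (hσ : IsNormalizedIntegral k A σ) (hlam : IsNormalizedCointegral k A lam)
    (hcc : _root_.IsCocomm k A) (hvol : lam σ ≠ 0) (a : A) : S (S a) = a := by
  have h1 : (a ⊗ₜ[k] (1 : A)) * Δ σ = ((S (S a)) ⊗ₜ[k] (1 : A)) * Δ σ := by
    rw [keyK hσ a, keyK' hσ hcc (S a)]
  have h2 := congrArg (L lam) h1
  rw [← L_mul_left, ← L_mul_left, L_comul hlam, mul_smul_comm, mul_smul_comm, mul_one] at h2
  have h3 : lam σ • a = lam σ • (S (S a)) := by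
    simpa [smul_smul, mul_comm] using h2
  exact (smul_right_injective A hvol h3).symm

/-- The key identity: `∑ lam (a qⱼ) • pⱼ = lam σ • S a` for `Δ σ = ∑ pⱼ ⊗ qⱼ`. -/
lemma keyStar (hσ : IsNormalizedIntegral k A σ) (hlam : IsNormalizedCointegral k A lam)
    {ι : Type*} (R : Coalgebra.Repr k σ ι) (a : A) :
    ∑ j ∈ R.index, lam (a * R.right j) • R.left j = lam σ • (S a) := by
  classical
  set T := ℛ k a with hT
  have key : ∑ i ∈ T.index, lam (T.right i * σ) • (S (T.left i)) = lam σ • (S a) := by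
    have h1 : ∀ i ∈ T.index, lam (T.right i * σ) • (S (T.left i))
        = lam σ • (ε (T.right i) • (S (T.left i))) := by
      intro i _
      rw [hσ.1, map_smul, smul_eq_mul, mul_comm, mul_smul]
    rw [Finset.sum_congr rfl h1, ← Finset.smul_sum]
    congr 1
    conv_rhs => rw [← sum_counit_right_smul a T]
    rw [map_sum]
    exact Finset.sum_congr rfl fun i _ => by rw [map_smul]
  have key2 : ∀ i ∈ T.index, lam (T.right i * σ) • (S (T.left i))
      = L lam (((S (T.left i)) ⊗ₜ[k] (1 : A)) * (Δ (T.right i) * Δ σ)) := by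
    intro i _
    rw [← Bialgebra.comul_mul, ← L_mul_left, L_comul hlam, mul_smul_comm, mul_one]
  have key3 : ∑ i ∈ T.index, L lam (((S (T.left i)) ⊗ₜ[k] (1 : A)) * (Δ (T.right i) * Δ σ))
      = L lam (((1 : A) ⊗ₜ[k] a) * Δ σ) := by
    rw [← map_sum]
    congr 1
    calc ∑ i ∈ T.index, ((S (T.left i)) ⊗ₜ[k] (1 : A)) * (Δ (T.right i) * Δ σ)
        = (∑ i ∈ T.index, ((S (T.left i)) ⊗ₜ[k] (1 : A)) * Δ (T.right i)) * Δ σ := by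
          rw [Finset.sum_mul]
          exact Finset.sum_congr rfl fun i _ => (mul_assoc _ _ _).symm
      _ = ((1 : A) ⊗ₜ[k] a) * Δ σ := by rw [keyJ a T]
  have key4 : L lam (((1 : A) ⊗ₜ[k] a) * Δ σ)
      = ∑ j ∈ R.index, lam (a * R.right j) • R.left j := by
    rw [← R.eq, Finset.mul_sum, map_sum]
    refine Finset.sum_congr rfl fun j _ => ?_
    rw [Algebra.TensorProduct.tmul_mul_tmul, one_mul, L_tmul]
  calc ∑ j ∈ R.index, lam (a * R.right j) • R.left j
      = L lam (((1 : A) ⊗ₜ[k] a) * Δ σ) := key4.symm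
    _ = ∑ i ∈ T.index, L lam (((S (T.left i)) ⊗ₜ[k] (1 : A)) * (Δ (T.right i) * Δ σ)) := key3.symm
    _ = ∑ i ∈ T.index, lam (T.right i * σ) • (S (T.left i)) :=
        Finset.sum_congr rfl fun i hi => (key2 i hi).symm
    _ = lam σ • (S a) := key

/-- Dual basis identity. -/
lemma keyStar' (hσ : IsNormalizedIntegral k A σ) (hlam : IsNormalizedCointegral k A lam)
    (hcc : _root_.IsCocomm k A) (hvol : lam σ ≠ 0) {ι : Type*} (R : Coalgebra.Repr k σ ι) (a : A) :
    ∑ j ∈ R.index, lam ((S a) * R.right j) • R.left j = lam σ • a := by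
  have h := keyStar hσ hlam R (S a)
  rwa [antipode_sq hσ hlam hcc hvol a] at h

/-- In characteristic two, a symmetric double sum collapses to its diagonal. -/
lemma sum_sym_char2 {K : Type*} [Field K] [CharP K 2] {ι : Type*} [DecidableEq ι] (s : Finset ι)
    (c : ι → ι → K) (hsym : ∀ i j, c i j = c j i) :
    ∑ i ∈ s, ∑ j ∈ s, c i j = ∑ i ∈ s, c i i := by
  rw [← Finset.sum_product', ← Finset.diag_union_offDiag s,
    Finset.sum_union (Finset.disjoint_diag_offDiag s), Finset.sum_diag]
  have h0 : ∑ p ∈ s.offDiag, c p.1 p.2 = 0 := by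
    refine Finset.sum_involution (fun p _ => Prod.swap p) ?_ ?_ ?_ ?_
    · intro p _
      rw [hsym p.1 p.2]
      exact CharTwo.add_self_eq_zero _
    · intro p hp _
      intro hc
      exact (Finset.mem_offDiag.1 hp).2.2 (congrArg Prod.fst hc).symm
    · intro p hp
      rw [Finset.mem_offDiag] at hp ⊢
      exact ⟨hp.2.1, hp.1, fun h => hp.2.2 h.symm⟩
    · intro p _
      rfl
  rw [h0, add_zero]


/-- Trace of a rank-one map `a ↦ f a • v` is `f v`. -/
lemma trace_rankOne [Module.Finite k A] (f : A →ₗ[k] k) (v : A) :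
    LinearMap.trace k A (LinearMap.toSpanSingleton k A v ∘ₗ f) = f v := by
  rw [LinearMap.trace_comp_comm']
  have h : f ∘ₗ LinearMap.toSpanSingleton k A v = f v • LinearMap.id := by
    ext
    simp [mul_comm]
  rw [h, map_smul, LinearMap.trace_id, Module.finrank_self, Nat.cast_one, smul_eq_mul, mul_one]

/-- The main computation. -/
lemma main [CharP k 2] (hcc : _root_.IsCocomm k A) (hσ : IsNormalizedIntegral k A σ)
    (hlam : IsNormalizedCointegral k A lam) (hvol : lam σ ≠ 0) :
    (Module.finrank k A : k) = 1 := by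
  classical
  set R := ℛ k σ with hR
  haveI finA : Module.Finite k A := by
    constructor
    refine ⟨R.index.image R.left, ?_⟩
    rw [eq_top_iff]
    rintro a -
    have h := keyStar' hσ hlam hcc hvol R a
    have ha : a = (lam σ)⁻¹ • ∑ j ∈ R.index, lam ((S a) * R.right j) • R.left j := by
      rw [h, inv_smul_smul₀ hvol]
    rw [ha]
    refine Submodule.smul_mem _ _ (Submodule.sum_mem _ fun j hj => ?_)
    exact Submodule.smul_mem _ _
      (Submodule.subset_span (Finset.mem_coe.2 (Finset.mem_image_of_mem R.left hj)))
  haveI := Classical.decEq (A × A)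
  set g : (A × A) → (A →ₗ[k] k) :=
    fun j => lam ∘ₗ (LinearMap.mulRight k (R.right j)) ∘ₗ HopfAlgebra.antipode (R := k) with hg
  set T : (A × A) → (A →ₗ[k] A) :=
    fun j => LinearMap.toSpanSingleton k A (R.left j) ∘ₗ g j with hgT
  have hgapp : ∀ j a, g j a = lam ((S a) * R.right j) := by
    intro j a
    simp [hg]
  have hTapp : ∀ j a, T j a = lam ((S a) * R.right j) • R.left j := by
    intro j a
    simp [hgT, hg]
  have hPid : ∑ j ∈ R.index, T j = lam σ • (LinearMap.id : A →ₗ[k] A) := by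
    ext a
    rw [LinearMap.sum_apply]
    simp only [hTapp]
    simpa using keyStar' hσ hlam hcc hvol R a
  have hsumd : ∑ j ∈ R.index, lam ((S (R.left j)) * R.right j) = 1 := by
    rw [← map_sum lam _ R.index, HopfAlgebra.sum_antipode_mul_eq_smul R, map_smul, hσ.2,
      hlam.1, smul_eq_mul, mul_one]
  have htrT : ∀ j, LinearMap.trace k A (T j) = lam ((S (R.left j)) * R.right j) := by
    intro j
    rw [hgT]
    dsimp only
    rw [trace_rankOne, hgapp]
  have htrP : LinearMap.trace k A (∑ j ∈ R.index, T j) = 1 := by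
    rw [map_sum, Finset.sum_congr rfl fun j _ => htrT j, hsumd]
  have hcn : lam σ * (Module.finrank k A : k) = 1 := by
    have h := htrP
    rw [hPid, map_smul, LinearMap.trace_id, smul_eq_mul] at h
    exact h
  have hcompTT : ∀ j l, (T j) ∘ₗ (T l)
      = g j (R.left l) • (LinearMap.toSpanSingleton k A (R.left j) ∘ₗ g l) := by
    intro j l
    ext a
    simp only [LinearMap.comp_apply, LinearMap.smul_apply, hgT, LinearMap.toSpanSingleton_apply,
      map_smul, smul_eq_mul, smul_smul]
    rw [mul_comm]
  have htrTT : ∀ j l, LinearMap.trace k A ((T j) ∘ₗ (T l))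
      = lam ((S (R.left l)) * R.right j) * lam ((S (R.left j)) * R.right l) := by
    intro j l
    rw [hcompTT j l, map_smul, trace_rankOne, hgapp, hgapp, smul_eq_mul]
  have hcompsum : (∑ j ∈ R.index, T j) ∘ₗ (∑ l ∈ R.index, T l)
      = ∑ j ∈ R.index, ∑ l ∈ R.index, (T j) ∘ₗ (T l) := by
    ext a
    simp [LinearMap.sum_apply, map_sum]
  have hPP : LinearMap.trace k A ((∑ j ∈ R.index, T j) ∘ₗ (∑ l ∈ R.index, T l)) = lam σ := by
    rw [hPid, LinearMap.smul_comp, LinearMap.id_comp, map_smul, map_smul, LinearMap.trace_id,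
      smul_eq_mul, smul_eq_mul, hcn, mul_one]
  have hPP2 : LinearMap.trace k A ((∑ j ∈ R.index, T j) ∘ₗ (∑ l ∈ R.index, T l))
      = ∑ j ∈ R.index, ∑ l ∈ R.index,
          lam ((S (R.left l)) * R.right j) * lam ((S (R.left j)) * R.right l) := by
    rw [hcompsum, map_sum]
    refine Finset.sum_congr rfl fun j _ => ?_
    rw [map_sum]
    exact Finset.sum_congr rfl fun l _ => htrTT j l
  have hlamσ : lam σ = 1 := by
    have h1 : lam σ = ∑ j ∈ R.index, ∑ l ∈ R.index,
        lam ((S (R.left l)) * R.right j) * lam ((S (R.left j)) * R.right l) := by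
      rw [← hPP, hPP2]
    rw [sum_sym_char2 R.index _ (fun i j => mul_comm _ _)] at h1
    have h2 : ∑ j ∈ R.index,
        lam ((S (R.left j)) * R.right j) * lam ((S (R.left j)) * R.right j) = 1 := by
      rw [← sum_sym_char2 R.index
          (fun j l => lam ((S (R.left j)) * R.right j) * lam ((S (R.left l)) * R.right l))
          (fun i j => mul_comm _ _),
        ← Finset.sum_mul_sum, hsumd, mul_one]
    rw [h1, h2]
  rw [hlamσ, one_mul] at hcn
  exact hcn

end FinVolAux

end FinVolAux

/-- Over a field of characteristic 2, a bicommutative Hopf algebra with a finite volume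
has `(dim_k A : k) = 1`; equivalently, `dim_k A` is odd. -/
theorem finrank_eq_one_of_char_two
    (k A : Type*) [Field k] [CharP k 2] [CommRing A] [HopfAlgebra k A] (hcc : IsCocomm k A)
    (σ : A) (lam : A →ₗ[k] k)
    (hσ : IsNormalizedIntegral k A σ) (hlam : IsNormalizedCointegral k A lam)
    (hvol : lam σ ≠ 0) :
    (Module.finrank k A : k) = 1 ∧ Odd (Module.finrank k A) := by
  have h1 : (Module.finrank k A : k) = 1 := FinVolAux.main hcc hσ hlam hvol
  refine ⟨h1, ?_⟩
  rcases Nat.even_or_odd (Module.finrank k A) with he | ho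
  · exfalso
    have h2 : ((Module.finrank k A : ℕ) : k) = 0 :=
      (CharP.cast_eq_zero_iff k 2 _).2 he.two_dvd
    rw [h1] at h2
    exact one_ne_zero h2
  · exact ho
end

section
/- Let 𝒜 be an abelian category and consider a commutative ladder with vertical morphisms ξ : A₀ → A₁, ξ' : A₁ → A₂ and φ : B₀ → B₁, φ' : B₁ → B₂, and horizontal morphisms h₀ : A₀ → B₀, h₁ : A₁ → B₁, h₂ : A₂ → B₂ satisfying h₁ ∘ ξ = φ ∘ h₀ and h₂ ∘ ξ' = φ' ∘ h₁. Assume both squares are exact in the sense that: the morphism ker ξ → ker φ induced by h₀ is an epimorphism and the morphism coker ξ → coker φ induced by h₁ is a monomorphism (lower square), and the morphism ker ξ' → ker φ' induced by h₁ is an epimorphism and the morphism coker ξ' → coker φ' induced by h₂ is a monomorphism (upper square). Then the image of ∂(ξ', ξ) : ker ξ' → coker ξ is isomorphic to the image of ∂(φ', φ) : ker φ' → coker φ. -/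
open CategoryTheory CategoryTheory.Limits

variable {𝒜 : Type*} [Category 𝒜] [Abelian 𝒜]

/-- Given a commutative square `f ≫ g = f' ≫ g'`, the induced morphism `ker f' ⟶ ker g`:
the unique morphism whose composite with the kernel inclusion of `g` is
`kernel.ι f' ≫ f`. -/
noncomputable def squareKerMap {A B C D : 𝒜} (f : A ⟶ B) (f' : A ⟶ C) (g : B ⟶ D)
    (g' : C ⟶ D) (w : f ≫ g = f' ≫ g') : kernel f' ⟶ kernel g :=
  kernel.lift g (kernel.ι f' ≫ f) (by
    rw [Category.assoc, w, ← Category.assoc, kernel.condition, zero_comp])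

/-- Given a commutative square `f ≫ g = f' ≫ g'`, the induced morphism
`coker f' ⟶ coker g`: the unique morphism whose precomposition with the cokernel projection
of `f'` is `g' ≫ cokernel.π g`. -/
noncomputable def squareCokerMap {A B C D : 𝒜} (f : A ⟶ B) (f' : A ⟶ C) (g : B ⟶ D)
    (g' : C ⟶ D) (w : f ≫ g = f' ≫ g') : cokernel f' ⟶ cokernel g :=
  cokernel.desc f' (g' ≫ cokernel.π g) (by
    rw [← Category.assoc, ← w, Category.assoc, cokernel.condition, comp_zero])

/-- The connecting morphism `∂(ξ', ξ) : ker ξ' ⟶ coker ξ` of a composable pair `ξ, ξ'`: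
the composite of the kernel inclusion of `ξ'` with the cokernel projection of `ξ`. -/
noncomputable def connectingMap {A₀ A₁ A₂ : 𝒜} (ξ : A₀ ⟶ A₁) (ξ' : A₁ ⟶ A₂) :
    kernel ξ' ⟶ cokernel ξ :=
  kernel.ι ξ' ≫ cokernel.π ξ

-- If `e ≫ g = f ≫ m` with `e` epi and `m` mono, then `image f ≅ image g`. -/
noncomputable def imageIsoOfSquare {X Y X' Y' : 𝒜} (e : X ⟶ X') (m : Y ⟶ Y')
    (f : X ⟶ Y) (g : X' ⟶ Y') [Epi e] [Mono m] (w : e ≫ g = f ≫ m) :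
    image f ≅ image g :=
  letI : StrongEpi (e ≫ factorThruImage g) := strongEpi_of_epi _
  (image.isoStrongEpiMono (factorThruImage f) (image.ι f ≫ m)
      (by rw [← Category.assoc, image.fac])).trans <|
    (eqToIso (show image (f ≫ m) = image (e ≫ g) by rw [w])).trans
      (image.isoStrongEpiMono (e ≫ factorThruImage g) (image.ι g)
        (by rw [Category.assoc, image.fac])).symm

/-- Given a commutative ladder whose two squares are exact (the induced kernel
morphisms are epimorphisms and the induced cokernel morphisms are monomorphisms), the
images of the connecting morphisms `∂(ξ', ξ) : ker ξ' ⟶ coker ξ` and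
`∂(φ', φ) : ker φ' ⟶ coker φ` are isomorphic. -/
theorem image_connecting_iso_of_exact_squares
    {A₀ A₁ A₂ B₀ B₁ B₂ : 𝒜}
    (ξ : A₀ ⟶ A₁) (ξ' : A₁ ⟶ A₂) (φ : B₀ ⟶ B₁) (φ' : B₁ ⟶ B₂)
    (h₀ : A₀ ⟶ B₀) (h₁ : A₁ ⟶ B₁) (h₂ : A₂ ⟶ B₂)
    (wlow : h₀ ≫ φ = ξ ≫ h₁) (wup : h₁ ≫ φ' = ξ' ≫ h₂)
    (hlowKer : Epi (squareKerMap h₀ ξ φ h₁ wlow))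
    (hlowCoker : Mono (squareCokerMap h₀ ξ φ h₁ wlow))
    (hupKer : Epi (squareKerMap h₁ ξ' φ' h₂ wup))
    (hupCoker : Mono (squareCokerMap h₁ ξ' φ' h₂ wup)) :
    Nonempty (image (connectingMap ξ ξ') ≅ image (connectingMap φ φ')) := by
  refine ⟨imageIsoOfSquare (squareKerMap h₁ ξ' φ' h₂ wup)
    (squareCokerMap h₀ ξ φ h₁ wlow) (connectingMap ξ ξ') (connectingMap φ φ') ?_⟩
  simp only [squareKerMap, squareCokerMap, connectingMap]
  rw [← Category.assoc, kernel.lift_ι, Category.assoc, Category.assoc,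
    cokernel.π_desc]
end

section
/- Let 𝒜 be an abelian category and let f : A → B, f' : A → C, g : B → D, g' : C → D be a commutative square, i.e. g ∘ f = g' ∘ f'. Form the three-term complex A →(u) B ⊞ C →(v) D where u = biprod.lift f (−f') and v = biprod.desc g g' (note v ∘ u = 0 by commutativity). Then the square is exact (i.e. the induced morphism k_□ : ker f' → ker g is an epimorphism and the induced morphism c_□ : coker f' → coker g is a monomorphism) if and only if the complex is exact at the middle term B ⊞ C, i.e. the image of u equals the kernel of v. -/
open CategoryTheory CategoryTheory.Limits

variable {𝒜 : Type*} [Category 𝒜] [Abelian 𝒜]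

lemma squareKerMap_ι {A B C D : 𝒜} (f : A ⟶ B) (f' : A ⟶ C) (g : B ⟶ D)
    (g' : C ⟶ D) (w : f ≫ g = f' ≫ g') :
    squareKerMap f f' g g' w ≫ kernel.ι g = kernel.ι f' ≫ f :=
  kernel.lift_ι _ _ _

lemma π_squareCokerMap {A B C D : 𝒜} (f : A ⟶ B) (f' : A ⟶ C) (g : B ⟶ D)
    (g' : C ⟶ D) (w : f ≫ g = f' ≫ g') :
    cokernel.π f' ≫ squareCokerMap f f' g g' w = g' ≫ cokernel.π g :=
  cokernel.π_desc _ _ _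

lemma exact_mk_cokernelπ {X Y : 𝒜} (f : X ⟶ Y) :
    (ShortComplex.mk f (cokernel.π f) (cokernel.condition f)).Exact :=
  ShortComplex.exact_of_g_is_cokernel _ (cokernelIsCokernel f)

/-- A commutative square `f ≫ g = f' ≫ g'` is exact (the induced morphism
`ker f' ⟶ ker g` is epi and the induced morphism `coker f' ⟶ coker g` is mono) if and only
if the induced three-term complex `A ⟶ B ⊞ C ⟶ D`, with first map `biprod.lift f (-f')`
and second map `biprod.desc g g'`, is exact at the middle term. -/
theorem square_exact_iff_complex_exact
    {A B C D : 𝒜} (f : A ⟶ B) (f' : A ⟶ C) (g : B ⟶ D) (g' : C ⟶ D)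
    (w : f ≫ g = f' ≫ g') :
    (Epi (squareKerMap f f' g g' w) ∧ Mono (squareCokerMap f f' g g' w)) ↔
      (ShortComplex.mk (biprod.lift f (-f')) (biprod.desc g g')
        (by simp [w])).Exact := by
  constructor
  · rintro ⟨hk, hc⟩
    rw [ShortComplex.exact_iff_exact_up_to_refinements]
    intro T x hx
    dsimp at x hx ⊢
    obtain ⟨b, hb⟩ : ∃ b, x ≫ biprod.fst = b := ⟨_, rfl⟩
    obtain ⟨cc, hcc⟩ : ∃ cc, x ≫ biprod.snd = cc := ⟨_, rfl⟩
    have hsum : b ≫ g + cc ≫ g' = 0 := by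
      rw [← hb, ← hcc, Category.assoc, Category.assoc, ← Preadditive.comp_add,
        ← biprod.desc_eq, hx]
    -- Step 1: cc ≫ cokernel.π f' = 0
    have h1 : cc ≫ cokernel.π f' = 0 := by
      rw [← cancel_mono (squareCokerMap f f' g g' w), Category.assoc,
        π_squareCokerMap, zero_comp]
      have hneg : cc ≫ g' = -(b ≫ g) := by rw [eq_neg_iff_add_eq_zero, add_comm]; exact hsum
      rw [← Category.assoc, hneg, Preadditive.neg_comp, Category.assoc,
        cokernel.condition, comp_zero, neg_zero]
    -- Step 2: refine cc through f'
    obtain ⟨T₁, π₁, hπ₁, a₁, h₁⟩ :=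
      (exact_mk_cokernelπ f').exact_up_to_refinements cc h1
    dsimp at a₁ h₁
    -- Step 3: b₁ ≫ g = 0
    have hb₁ : (π₁ ≫ b + a₁ ≫ f) ≫ g = 0 := by
      have e1 : (a₁ ≫ f) ≫ g = π₁ ≫ cc ≫ g' := by
        rw [Category.assoc, w, ← Category.assoc, ← h₁, Category.assoc]
      rw [Preadditive.add_comp, e1, Category.assoc, ← Preadditive.comp_add, hsum,
        comp_zero]
    -- Step 4: refine the kernel lift through squareKerMap
    obtain ⟨T₂, π₂, hπ₂, t, h₂⟩ :=
      surjective_up_to_refinements_of_epi (squareKerMap f f' g g' w)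
        (kernel.lift g (π₁ ≫ b + a₁ ≫ f) hb₁)
    have h₂' : π₂ ≫ (π₁ ≫ b + a₁ ≫ f) = t ≫ kernel.ι f' ≫ f := by
      have e2 := h₂ =≫ kernel.ι g
      rw [Category.assoc, Category.assoc, kernel.lift_ι, squareKerMap_ι] at e2
      exact e2
    refine ⟨T₂, π₂ ≫ π₁, epi_comp _ _, t ≫ kernel.ι f' - π₂ ≫ a₁, ?_⟩
    apply biprod.hom_ext
    · simp only [Category.assoc, biprod.lift_fst, hb, Preadditive.sub_comp]
      rw [← h₂', Preadditive.comp_add]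
      abel
    · have e3 : π₂ ≫ π₁ ≫ cc = π₂ ≫ a₁ ≫ f' := by rw [h₁]
      simp only [Category.assoc, biprod.lift_snd, hcc, Preadditive.sub_comp,
        Preadditive.comp_neg, kernel.condition, comp_zero, neg_zero, zero_sub, neg_neg]
      exact e3
  · intro hS
    constructor
    · rw [epi_iff_surjective_up_to_refinements]
      intro T y
      have hx : biprod.lift (y ≫ kernel.ι g) 0 ≫ biprod.desc g g' = 0 := by
        rw [biprod.lift_desc, zero_comp, add_zero, Category.assoc,
          kernel.condition, comp_zero]
      obtain ⟨T', π, hπ, a, h⟩ := hS.exact_up_to_refinements _ hx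
      dsimp at a h
      have hfst : π ≫ y ≫ kernel.ι g = a ≫ f := by
        have e := h =≫ biprod.fst
        simpa using e
      have hsnd : a ≫ f' = 0 := by
        have e := h =≫ biprod.snd
        simp only [Category.assoc, biprod.lift_snd, comp_zero,
          Preadditive.comp_neg] at e
        rw [← neg_eq_zero, e]
      refine ⟨T', π, hπ, kernel.lift f' a hsnd, ?_⟩
      rw [← cancel_mono (kernel.ι g), Category.assoc, Category.assoc,
        squareKerMap_ι, kernel.lift_ι_assoc, ← hfst]
    · rw [Preadditive.mono_iff_cancel_zero]
      intro T z hz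
      obtain ⟨T₁, π₁, hπ₁, cc, h₁⟩ :=
        surjective_up_to_refinements_of_epi (cokernel.π f') z
      have h1 : (cc ≫ g') ≫ cokernel.π g = 0 := by
        rw [Category.assoc, ← π_squareCokerMap f f' g g' w, ← Category.assoc,
          ← h₁, Category.assoc, hz, comp_zero]
      obtain ⟨T₂, π₂, hπ₂, b, h₂⟩ :=
        (exact_mk_cokernelπ g).exact_up_to_refinements (cc ≫ g') h1
      dsimp at b h₂
      have hx : biprod.lift b (-(π₂ ≫ cc)) ≫ biprod.desc g g' = 0 := by
        rw [biprod.lift_desc, Preadditive.neg_comp, Category.assoc, ← h₂,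
          add_neg_cancel]
      obtain ⟨T₃, π₃, hπ₃, a, h₃⟩ := hS.exact_up_to_refinements _ hx
      dsimp at a h₃
      have hsnd : π₃ ≫ π₂ ≫ cc = a ≫ f' := by
        have e := h₃ =≫ biprod.snd
        simp only [Category.assoc, biprod.lift_snd, Preadditive.comp_neg] at e
        rw [← neg_inj]
        simpa using e
      have hzero : (π₃ ≫ π₂ ≫ π₁) ≫ z = 0 := by
        rw [Category.assoc, Category.assoc, h₁, ← Category.assoc π₂,
          ← Category.assoc, hsnd, Category.assoc, cokernel.condition, comp_zero]
      have hepi : Epi (π₃ ≫ π₂ ≫ π₁) := epi_comp _ _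
      rw [← cancel_epi (π₃ ≫ π₂ ≫ π₁), hzero, comp_zero]
end
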